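/- arXiv:1912.06881 — 2 statements merged into one kernel-verified Lean document; each statement's English description precedes it below -/
import Mathlib

section
/- Let λ > 0, θ > 0, d ≥ 1, β ≥ 0, C ≥ 0, and α > (d + β)/(2θ). Then there is a constant c independent of λ ≥ 1 and of k such that for every k ∈ λ^{-1}ℤ^d, λ^{-d} · Σ_{p ∈ λ^{-1}ℤ^d} |p|^β / (|p|^{2θ} + |k - p|^{2θ} + C)^α ≤ c · (|k|^{2θ} + C)^{(β+d)/(2θ) - α}. -/
open ENNReal

private noncomputable def latticePt (d : ℕ) (lam : ℝ) (m : Fin d → ℤ) : EuclideanSpace ℝ (Fin d) :=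
  (WithLp.equiv 2 (Fin d → ℝ)).symm fun i => (m i : ℝ) / lam

private lemma coord_abs_le_norm {d : ℕ} (x : EuclideanSpace ℝ (Fin d)) (i : Fin d) :
    |x i| ≤ ‖x‖ := by
  rw [EuclideanSpace.norm_eq, ← Real.sqrt_sq_eq_abs]
  apply Real.sqrt_le_sqrt
  have := Finset.single_le_sum (f := fun j => ‖x j‖ ^ 2)
    (fun j _ => by positivity) (Finset.mem_univ i)
  simpa [Real.norm_eq_abs, sq_abs] using this

private lemma latticePt_coord {d : ℕ} {lam : ℝ} (hlam : 0 < lam) (m : Fin d → ℤ) (i : Fin d) :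
    ((m i).natAbs : ℝ) ≤ lam * ‖latticePt d lam m‖ := by
  have h1 : |latticePt d lam m i| ≤ ‖latticePt d lam m‖ := coord_abs_le_norm _ i
  have h2 : latticePt d lam m i = (m i : ℝ) / lam := rfl
  rw [h2, abs_div, abs_of_pos hlam] at h1
  have h3 : ((m i).natAbs : ℝ) = |(m i : ℝ)| := by
    simp [Nat.cast_natAbs, Int.cast_abs]
  rw [h3]
  calc |(m i : ℝ)| = |(m i : ℝ)| / lam * lam := by field_simp
    _ ≤ ‖latticePt d lam m‖ * lam := by
        apply mul_le_mul_of_nonneg_right h1 hlam.le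
    _ = lam * ‖latticePt d lam m‖ := mul_comm _ _

private lemma count_le {d : ℕ} (f : (Fin d → ℤ) → ℝ≥0∞) (c : ℝ≥0∞) (N : ℕ)
    (h0 : ∀ m, f m ≠ 0 → ∀ i, (m i).natAbs ≤ N) (hle : ∀ m, f m ≤ c) :
    ∑' m, f m ≤ ((2 * N + 1 : ℕ) : ℝ≥0∞) ^ d * c := by
  classical
  set s : Finset (Fin d → ℤ) := Fintype.piFinset (fun _ => Finset.Icc (-(N : ℤ)) (N : ℤ))
    with hs
  have hsupp : ∀ m ∉ s, f m = 0 := by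
    intro m hm
    by_contra hne
    apply hm
    rw [hs, Fintype.mem_piFinset]
    intro i
    have := h0 m hne i
    rw [Finset.mem_Icc]
    omega
  rw [tsum_eq_sum hsupp]
  have hcard : s.card = (2 * N + 1) ^ d := by
    rw [hs, Fintype.card_piFinset]
    have : (Finset.Icc (-(N : ℤ)) (N : ℤ)).card = 2 * N + 1 := by
      rw [Int.card_Icc]; omega
    simp [this]
  calc ∑ m ∈ s, f m ≤ s.card • c := Finset.sum_le_card_nsmul _ _ _ (fun m _ => hle m)
    _ = ((2 * N + 1 : ℕ) : ℝ≥0∞) ^ d * c := by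
        rw [hcard, nsmul_eq_mul]; push_cast; ring

set_option maxHeartbeats 2000000 in
private lemma aux (θ : ℝ) (hθ : 0 < θ) (d : ℕ) (hd : 1 ≤ d) (β C : ℝ) (hβ : 0 ≤ β) (hC : 0 ≤ C)
    (α : ℝ) (hα : (d + β) / (2 * θ) < α) :
    ∃ c : ℝ≥0∞, c ≠ ⊤ ∧ ∀ lam : ℝ, 1 ≤ lam → ∀ km : Fin d → ℤ,
      (ENNReal.ofReal (lam ^ (-(d : ℝ)))) *
        ∑' m : Fin d → ℤ,
          ENNReal.ofReal (‖latticePt d lam m‖ ^ β /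
            (‖latticePt d lam m‖ ^ (2 * θ) +
              ‖latticePt d lam km - latticePt d lam m‖ ^ (2 * θ) + C) ^ α)
      ≤ c * (ENNReal.ofReal (‖latticePt d lam km‖ ^ (2 * θ) + C))
            ^ ((β + d) / (2 * θ) - α) := by
  have h2θ : (0:ℝ) < 2 * θ := by linarith
  set s : ℝ := 2 * θ * α - β with hs_def
  have hαpos : 0 < α := lt_of_le_of_lt (by positivity) hα
  have hds : (d : ℝ) < s := by
    have h1 : (d : ℝ) + β < α * (2 * θ) := (div_lt_iff₀ h2θ).mp hα
    rw [hs_def]; nlinarith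
  have hspos : (0:ℝ) < s := lt_of_le_of_lt (Nat.cast_nonneg d) hds
  set e : ℝ := (β + d) / (2 * θ) - α with he_def
  have he_neg : e < 0 := by
    have h1 : (β + (d:ℝ)) / (2 * θ) = ((d:ℝ) + β) / (2 * θ) := by ring
    rw [he_def, h1]; linarith
  have hes : e = ((d : ℝ) - s) / (2 * θ) := by
    rw [he_def, hs_def]; field_simp; ring
  set γ : ℝ := if C = 0 then 1 else min 1 (C ^ (1 / (2 * θ))) with hγ_def
  have hγ0 : 0 < γ := by
    rw [hγ_def]
    split_ifs with h
    · norm_num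
    · exact lt_min one_pos (Real.rpow_pos_of_pos (lt_of_le_of_ne hC (Ne.symm h)) _)
  have hγ1 : γ ≤ 1 := by
    rw [hγ_def]; split_ifs with h
    · exact le_refl 1
    · exact min_le_left _ _
  set q : ℝ := (2 : ℝ) ^ ((d : ℝ) - s) with hq_def
  have hq0 : 0 ≤ q := (Real.rpow_pos_of_pos two_pos _).le
  have hq1 : q < 1 := Real.rpow_lt_one_of_one_lt_of_neg one_lt_two (by linarith)
  set cB : ℝ := 3 ^ d * (γ⁻¹) ^ d * (2 : ℝ) ^ (2 * θ * α) with hcB_def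
  set cA : ℝ := 3 ^ d * 4 ^ d * (γ⁻¹) ^ d with hcA_def
  have hcB0 : 0 ≤ cB := by rw [hcB_def]; positivity
  have hcA0 : 0 ≤ cA := by rw [hcA_def]; positivity
  have hq1' : ENNReal.ofReal q < 1 := by
    rw [← ENNReal.ofReal_one]
    exact (ENNReal.ofReal_lt_ofReal_iff one_pos).mpr hq1
  set G : ℝ≥0∞ := (1 - ENNReal.ofReal q)⁻¹ with hG_def
  have hGne : G ≠ ⊤ := by
    rw [hG_def, Ne, ENNReal.inv_eq_top, tsub_eq_zero_iff_le]
    exact not_le.mpr hq1'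
  refine ⟨1 + ENNReal.ofReal cB + ENNReal.ofReal cA * G, ?_, ?_⟩
  · exact ENNReal.add_ne_top.mpr ⟨ENNReal.add_ne_top.mpr ⟨one_ne_top, ofReal_ne_top⟩,
      ENNReal.mul_ne_top ofReal_ne_top hGne⟩
  intro lam hlam km
  have hlam0 : (0:ℝ) < lam := lt_of_lt_of_le one_pos hlam
  set K : ℝ := ‖latticePt d lam km‖ ^ (2 * θ) + C with hK_def
  have hK0 : 0 ≤ K := by
    rw [hK_def]
    have := Real.rpow_nonneg (norm_nonneg (latticePt d lam km)) (2 * θ)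
    linarith
  rcases eq_or_lt_of_le hK0 with hKeq | hKpos
  · -- K = 0 : RHS is ⊤
    have hc0 : (1 + ENNReal.ofReal cB + ENNReal.ofReal cA * G) ≠ 0 := by
      have h1 : (1:ℝ≥0∞) ≤ 1 + ENNReal.ofReal cB + ENNReal.ofReal cA * G :=
        le_trans le_self_add le_self_add
      exact fun h => by simp [h] at h1
    rw [← hKeq, ENNReal.ofReal_zero, ENNReal.zero_rpow_of_neg he_neg, ENNReal.mul_top hc0]
    exact le_top
  -- main case K > 0
  set R : ℝ := K ^ (1 / (2 * θ)) with hR_def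
  have hR : 0 < R := Real.rpow_pos_of_pos hKpos _
  have hglR : γ ≤ lam * R := by
    rw [hγ_def]
    split_ifs with h
    · -- C = 0 : R = ‖k‖ and ‖k‖ ≥ 1/lam
      have hknorm : 0 < ‖latticePt d lam km‖ := by
        rcases eq_or_lt_of_le (norm_nonneg (latticePt d lam km)) with h0 | h0
        · exfalso
          rw [hK_def, h, ← h0, Real.zero_rpow (ne_of_gt h2θ)] at hKpos
          simpa using hKpos
        · exact h0
      have hRk : R = ‖latticePt d lam km‖ := by
        rw [hR_def, hK_def, h, add_zero, ← Real.rpow_mul (norm_nonneg _)]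
        rw [mul_one_div, div_self (ne_of_gt h2θ), Real.rpow_one]
      obtain ⟨i, hi⟩ : ∃ i, km i ≠ 0 := by
        by_contra hall
        push_neg at hall
        have : latticePt d lam km = 0 := by
          apply (WithLp.equiv 2 (Fin d → ℝ)).injective
          funext i
          simp [latticePt, hall i]
        rw [this, norm_zero] at hknorm
        exact lt_irrefl 0 hknorm
      have h1 : (1:ℝ) ≤ ((km i).natAbs : ℝ) := by
        have : 1 ≤ (km i).natAbs := by omega
        exact_mod_cast this
      calc (1:ℝ) ≤ ((km i).natAbs : ℝ) := h1
        _ ≤ lam * ‖latticePt d lam km‖ := latticePt_coord hlam0 km i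
        _ = lam * R := by rw [hRk]
    · -- C > 0
      have hCpos : 0 < C := lt_of_le_of_ne hC (Ne.symm h)
      have h1 : C ^ (1 / (2 * θ)) ≤ R := by
        rw [hR_def]
        apply Real.rpow_le_rpow hC _ (by positivity)
        rw [hK_def]
        have := Real.rpow_nonneg (norm_nonneg (latticePt d lam km)) (2 * θ)
        linarith
      calc min 1 (C ^ (1 / (2 * θ))) ≤ C ^ (1 / (2 * θ)) := min_le_right _ _
        _ ≤ R := h1
        _ = 1 * R := (one_mul R).symm
        _ ≤ lam * R := by apply mul_le_mul_of_nonneg_right hlam hR.le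
  -- denominator lower bound
  have h2θ1 : (1:ℝ) ≤ (2:ℝ) ^ (2 * θ) := Real.one_le_rpow one_le_two h2θ.le
  have h2θpow : (0:ℝ) < (2:ℝ) ^ (2 * θ) := by linarith
  have hD : ∀ m : Fin d → ℤ, K / (2:ℝ) ^ (2 * θ) ≤
      ‖latticePt d lam m‖ ^ (2 * θ) + ‖latticePt d lam km - latticePt d lam m‖ ^ (2 * θ) + C := by
    intro m
    set x : ℝ := ‖latticePt d lam m‖ with hx_def
    set y : ℝ := ‖latticePt d lam km - latticePt d lam m‖ with hy_def
    have hx0 : 0 ≤ x := norm_nonneg _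
    have hy0 : 0 ≤ y := norm_nonneg _
    set nk : ℝ := ‖latticePt d lam km‖ with hnk_def
    have hnk0 : 0 ≤ nk := norm_nonneg _
    have hhalf : (nk / 2) ^ (2 * θ) = nk ^ (2 * θ) / (2:ℝ) ^ (2 * θ) :=
      Real.div_rpow hnk0 (by norm_num : (0:ℝ) ≤ 2) _
    have hCle : C / (2:ℝ) ^ (2 * θ) ≤ C := div_le_self hC h2θ1
    have hx2 : 0 ≤ x ^ (2 * θ) := Real.rpow_nonneg hx0 _
    have hy2 : 0 ≤ y ^ (2 * θ) := Real.rpow_nonneg hy0 _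
    have hKsplit : K / (2:ℝ) ^ (2 * θ) = nk ^ (2 * θ) / (2:ℝ) ^ (2 * θ) + C / (2:ℝ) ^ (2 * θ) := by
      rw [hK_def]; ring
    rcases le_or_gt x (nk / 2) with hc | hc
    · have hy : nk / 2 ≤ y := by
        have htri : nk ≤ y + x := by
          have := norm_add_le (latticePt d lam km - latticePt d lam m) (latticePt d lam m)
          rw [sub_add_cancel] at this
          exact this
        linarith
      have h2 : (nk / 2) ^ (2 * θ) ≤ y ^ (2 * θ) :=
        Real.rpow_le_rpow (by positivity) hy h2θ.le
      rw [hKsplit, hhalf] at *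
      linarith
    · have h2 : (nk / 2) ^ (2 * θ) ≤ x ^ (2 * θ) :=
        Real.rpow_le_rpow (by positivity) hc.le h2θ.le
      rw [hKsplit, hhalf] at *
      linarith
  have hDpos : ∀ m : Fin d → ℤ, (0:ℝ) <
      ‖latticePt d lam m‖ ^ (2 * θ) + ‖latticePt d lam km - latticePt d lam m‖ ^ (2 * θ) + C :=
    fun m => lt_of_lt_of_le (by positivity) (hD m)
  -- the pieces
  set B : (Fin d → ℤ) → ℝ≥0∞ := fun m =>
    if ‖latticePt d lam m‖ < R then
      ENNReal.ofReal (R ^ β * (2:ℝ) ^ (2 * θ * α) / K ^ α) else 0 with hB_def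
  set A : (Fin d → ℤ) → ℝ≥0∞ := fun m =>
    if R ≤ ‖latticePt d lam m‖ then ENNReal.ofReal (‖latticePt d lam m‖ ^ (-s)) else 0
    with hA_def
  set At : ℕ → (Fin d → ℤ) → ℝ≥0∞ := fun t m =>
    if ‖latticePt d lam m‖ ≤ R * (2:ℝ) ^ (t + 2) then
      ENNReal.ofReal ((R * (2:ℝ) ^ t) ^ (-s)) else 0 with hAt_def
  -- pointwise bound
  have hpoint : ∀ m : Fin d → ℤ,
      ENNReal.ofReal (‖latticePt d lam m‖ ^ β /
        (‖latticePt d lam m‖ ^ (2 * θ) +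
          ‖latticePt d lam km - latticePt d lam m‖ ^ (2 * θ) + C) ^ α) ≤ B m + A m := by
    intro m
    set x : ℝ := ‖latticePt d lam m‖ with hx_def
    set D : ℝ := x ^ (2 * θ) + ‖latticePt d lam km - latticePt d lam m‖ ^ (2 * θ) + C with hD_def
    have hx0 : 0 ≤ x := norm_nonneg _
    have hDm := hD m
    have hDp := hDpos m
    rcases lt_or_ge x R with h | h
    · have hBm : B m = ENNReal.ofReal (R ^ β * (2:ℝ) ^ (2 * θ * α) / K ^ α) := by
        rw [hB_def]; exact if_pos h
      have hreal : x ^ β / D ^ α ≤ R ^ β * (2:ℝ) ^ (2 * θ * α) / K ^ α := by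
        have hnum : x ^ β ≤ R ^ β := Real.rpow_le_rpow hx0 h.le hβ
        have h2exp : ((2:ℝ) ^ (2 * θ)) ^ α = (2:ℝ) ^ (2 * θ * α) := by
          rw [← Real.rpow_mul (by norm_num : (0:ℝ) ≤ 2)]
        have hden : K ^ α / (2:ℝ) ^ (2 * θ * α) ≤ D ^ α := by
          rw [← h2exp, ← Real.div_rpow hK0 h2θpow.le]
          exact Real.rpow_le_rpow (by positivity) hDm hαpos.le
        have hdenpos : 0 < K ^ α / (2:ℝ) ^ (2 * θ * α) := by positivity
        calc x ^ β / D ^ α ≤ R ^ β / (K ^ α / (2:ℝ) ^ (2 * θ * α)) := by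
              apply div_le_div₀ (by positivity) hnum hdenpos hden
          _ = R ^ β * (2:ℝ) ^ (2 * θ * α) / K ^ α := by
              field_simp
      calc ENNReal.ofReal (x ^ β / D ^ α)
          ≤ ENNReal.ofReal (R ^ β * (2:ℝ) ^ (2 * θ * α) / K ^ α) :=
            ENNReal.ofReal_le_ofReal hreal
        _ = B m := hBm.symm
        _ ≤ B m + A m := le_add_of_nonneg_right (zero_le)
    · have hAm : A m = ENNReal.ofReal (x ^ (-s)) := by
        rw [hA_def]; exact if_pos h
      have hxpos : 0 < x := lt_of_lt_of_le hR h
      have hreal : x ^ β / D ^ α ≤ x ^ (-s) := by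
        have hden : x ^ (2 * θ * α) ≤ D ^ α := by
          have h1 : x ^ (2 * θ) ≤ D := by
            rw [hD_def]
            have := Real.rpow_nonneg (norm_nonneg
              (latticePt d lam km - latticePt d lam m)) (2 * θ)
            linarith
          calc x ^ (2 * θ * α) = (x ^ (2 * θ)) ^ α := Real.rpow_mul hx0 _ _
            _ ≤ D ^ α := Real.rpow_le_rpow (Real.rpow_nonneg hx0 _) h1 hαpos.le
        have hxa : 0 < x ^ (2 * θ * α) := Real.rpow_pos_of_pos hxpos _
        calc x ^ β / D ^ α ≤ x ^ β / x ^ (2 * θ * α) :=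
              div_le_div_of_nonneg_left (Real.rpow_nonneg hx0 _) hxa hden
          _ = x ^ (β - 2 * θ * α) := by rw [← Real.rpow_sub hxpos]
          _ = x ^ (-s) := by rw [hs_def]; ring_nf
      calc ENNReal.ofReal (x ^ β / D ^ α) ≤ ENNReal.ofReal (x ^ (-s)) :=
            ENNReal.ofReal_le_ofReal hreal
        _ = A m := hAm.symm
        _ ≤ B m + A m := le_add_of_nonneg_left (zero_le)
  -- the uniform counting bound
  have hl1 : lam ^ (-(d:ℝ)) * lam ^ (d:ℕ) = 1 := by
    rw [← Real.rpow_natCast lam d, ← Real.rpow_add hlam0]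
    simp
  have hmain : ∀ x z : ℝ, 1 ≤ x → 0 ≤ z →
      lam ^ (-(d:ℝ)) * ((2 * ⌊lam * (R * x)⌋₊ + 1 : ℕ) : ℝ) ^ d * z
        ≤ (3 / γ) ^ d * (R * x) ^ d * z := by
    intro x z hx hz
    have hx0 : (0:ℝ) ≤ x := by linarith
    have hRx0 : 0 ≤ lam * (R * x) := by positivity
    have hfl : (⌊lam * (R * x)⌋₊ : ℝ) ≤ lam * (R * x) := Nat.floor_le hRx0
    have hγx : γ ≤ lam * (R * x) := by
      calc γ ≤ lam * R := hglR
        _ = lam * R * 1 := (mul_one _).symm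
        _ ≤ lam * R * x := by apply mul_le_mul_of_nonneg_left hx (by positivity)
        _ = lam * (R * x) := by ring
    have h1 : ((2 * ⌊lam * (R * x)⌋₊ + 1 : ℕ) : ℝ) ≤ 3 * (lam * (R * x)) / γ := by
      have e0 : ((2 * ⌊lam * (R * x)⌋₊ + 1 : ℕ) : ℝ) = 2 * (⌊lam * (R * x)⌋₊ : ℝ) + 1 := by
        push_cast; ring
      rw [e0, le_div_iff₀ hγ0]
      have t1 : (⌊lam * (R * x)⌋₊ : ℝ) * γ ≤ lam * (R * x) * 1 :=
        mul_le_mul hfl hγ1 hγ0.le hRx0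
      linarith
    have h2 : ((2 * ⌊lam * (R * x)⌋₊ + 1 : ℕ) : ℝ) ^ d ≤ (3 * (lam * (R * x)) / γ) ^ d :=
      pow_le_pow_left₀ (Nat.cast_nonneg _) h1 d
    calc lam ^ (-(d:ℝ)) * ((2 * ⌊lam * (R * x)⌋₊ + 1 : ℕ) : ℝ) ^ d * z
        ≤ lam ^ (-(d:ℝ)) * (3 * (lam * (R * x)) / γ) ^ d * z := by
          apply mul_le_mul_of_nonneg_right _ hz
          apply mul_le_mul_of_nonneg_left h2 (by positivity)
      _ = (3 / γ) ^ d * (R * x) ^ d * z * (lam ^ (-(d:ℝ)) * lam ^ (d:ℕ)) := by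
          ring
      _ = (3 / γ) ^ d * (R * x) ^ d * z := by rw [hl1, mul_one]
  -- rpow algebra
  have hRK : ∀ u : ℝ, R ^ u = K ^ (u / (2 * θ)) := by
    intro u
    rw [hR_def, ← Real.rpow_mul hK0]
    congr 1
    field_simp
  have e1 : R ^ (d:ℝ) * R ^ β / K ^ α = K ^ e := by
    rw [← Real.rpow_add hR, hRK, ← Real.rpow_sub hKpos]
    congr 1
    rw [he_def]; ring
  have e2 : R ^ (d:ℝ) * R ^ (-s) = K ^ e := by
    rw [← Real.rpow_add hR, hRK]
    congr 1
    rw [hes]; ring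
  have e3 : ∀ t : ℕ, ((2:ℝ) ^ t) ^ (d:ℝ) * ((2:ℝ) ^ t) ^ (-s) = q ^ t := by
    intro t
    have h2t : (2:ℝ) ^ t = (2:ℝ) ^ (t:ℝ) := (Real.rpow_natCast 2 t).symm
    rw [h2t, ← Real.rpow_natCast q t, hq_def,
      ← Real.rpow_mul (by norm_num : (0:ℝ) ≤ 2),
      ← Real.rpow_mul (by norm_num : (0:ℝ) ≤ 2),
      ← Real.rpow_mul (by norm_num : (0:ℝ) ≤ 2),
      ← Real.rpow_add two_pos]
    congr 1
    ring
  have heqB : (3 / γ) ^ d * (R * 1) ^ d * (R ^ β * (2:ℝ) ^ (2 * θ * α) / K ^ α)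
      = cB * K ^ e := by
    rw [mul_one, ← Real.rpow_natCast R d]
    calc (3 / γ) ^ d * R ^ (d:ℝ) * (R ^ β * (2:ℝ) ^ (2 * θ * α) / K ^ α)
        = (3 / γ) ^ d * (2:ℝ) ^ (2 * θ * α) * (R ^ (d:ℝ) * R ^ β / K ^ α) := by ring
      _ = (3 / γ) ^ d * (2:ℝ) ^ (2 * θ * α) * K ^ e := by rw [e1]
      _ = cB * K ^ e := by rw [hcB_def]; ring
  have heqA : ∀ t : ℕ, (3 / γ) ^ d * (R * (2:ℝ) ^ (t + 2)) ^ d * ((R * (2:ℝ) ^ t) ^ (-s))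
      = cA * K ^ e * q ^ t := by
    intro t
    have h2tpos : (0:ℝ) < (2:ℝ) ^ t := by positivity
    have hsplit2 : (2:ℝ) ^ (t + 2) = (2:ℝ) ^ t * 4 := by rw [pow_add]; norm_num
    rw [Real.mul_rpow hR.le h2tpos.le, hsplit2]
    calc (3 / γ) ^ d * (R * ((2:ℝ) ^ t * 4)) ^ d * (R ^ (-s) * ((2:ℝ) ^ t) ^ (-s))
        = (3 / γ) ^ d * 4 ^ d * (R ^ (d:ℕ) * R ^ (-s)) * (((2:ℝ) ^ t) ^ (d:ℕ) * ((2:ℝ) ^ t) ^ (-s)) := by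
          ring
      _ = (3 / γ) ^ d * 4 ^ d * (R ^ (d:ℝ) * R ^ (-s)) * (((2:ℝ) ^ t) ^ (d:ℝ) * ((2:ℝ) ^ t) ^ (-s)) := by
          rw [Real.rpow_natCast R d, Real.rpow_natCast ((2:ℝ) ^ t) d]
      _ = (3 / γ) ^ d * 4 ^ d * K ^ e * q ^ t := by rw [e2, e3]
      _ = cA * K ^ e * q ^ t := by rw [hcA_def]; ring
  -- bound for the B part
  have hBle : ENNReal.ofReal (lam ^ (-(d:ℝ))) * ∑' m, B m ≤ ENNReal.ofReal (cB * K ^ e) := by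
    have hval0 : (0:ℝ) ≤ R ^ β * (2:ℝ) ^ (2 * θ * α) / K ^ α := by positivity
    have hcnt := count_le B (ENNReal.ofReal (R ^ β * (2:ℝ) ^ (2 * θ * α) / K ^ α))
        ⌊lam * (R * 1)⌋₊
      (by
        intro m hm i
        have hcond : ‖latticePt d lam m‖ < R := by
          by_contra hcond
          rw [hB_def] at hm
          simp only [if_neg hcond] at hm
          exact hm rfl
        apply Nat.le_floor
        calc ((m i).natAbs : ℝ) ≤ lam * ‖latticePt d lam m‖ := latticePt_coord hlam0 m i
          _ ≤ lam * (R * 1) := by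
              rw [mul_one]
              exact mul_le_mul_of_nonneg_left hcond.le hlam0.le)
      (by
        intro m
        simp only [hB_def]
        split_ifs
        · exact le_refl _
        · exact zero_le)
    calc ENNReal.ofReal (lam ^ (-(d:ℝ))) * ∑' m, B m
        ≤ ENNReal.ofReal (lam ^ (-(d:ℝ))) *
            (((2 * ⌊lam * (R * 1)⌋₊ + 1 : ℕ) : ℝ≥0∞) ^ d *
              ENNReal.ofReal (R ^ β * (2:ℝ) ^ (2 * θ * α) / K ^ α)) :=
          mul_le_mul' le_rfl hcnt
      _ = ENNReal.ofReal (lam ^ (-(d:ℝ)) *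
            (((2 * ⌊lam * (R * 1)⌋₊ + 1 : ℕ) : ℝ) ^ d *
              (R ^ β * (2:ℝ) ^ (2 * θ * α) / K ^ α))) := by
          rw [← ENNReal.ofReal_natCast (2 * ⌊lam * (R * 1)⌋₊ + 1),
            ← ENNReal.ofReal_pow (Nat.cast_nonneg _),
            ← ENNReal.ofReal_mul (by positivity),
            ← ENNReal.ofReal_mul (by positivity)]
      _ ≤ ENNReal.ofReal (cB * K ^ e) := by
          apply ENNReal.ofReal_le_ofReal
          calc lam ^ (-(d:ℝ)) * (((2 * ⌊lam * (R * 1)⌋₊ + 1 : ℕ) : ℝ) ^ d *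
                (R ^ β * (2:ℝ) ^ (2 * θ * α) / K ^ α))
              = lam ^ (-(d:ℝ)) * ((2 * ⌊lam * (R * 1)⌋₊ + 1 : ℕ) : ℝ) ^ d *
                (R ^ β * (2:ℝ) ^ (2 * θ * α) / K ^ α) := by ring
            _ ≤ (3 / γ) ^ d * (R * 1) ^ d * (R ^ β * (2:ℝ) ^ (2 * θ * α) / K ^ α) :=
                hmain 1 _ le_rfl hval0
            _ = cB * K ^ e := heqB
  -- bound for each dyadic piece of the A part
  have hAt : ∀ t : ℕ, ENNReal.ofReal (lam ^ (-(d:ℝ))) * ∑' m, At t m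
      ≤ ENNReal.ofReal (cA * K ^ e) * (ENNReal.ofReal q) ^ t := by
    intro t
    have hRt0 : (0:ℝ) ≤ (R * (2:ℝ) ^ t) ^ (-s) := by positivity
    have hx2 : (1:ℝ) ≤ (2:ℝ) ^ (t + 2) := one_le_pow₀ (by norm_num : (1:ℝ) ≤ 2)
    have hcnt := count_le (At t) (ENNReal.ofReal ((R * (2:ℝ) ^ t) ^ (-s)))
        ⌊lam * (R * (2:ℝ) ^ (t + 2))⌋₊
      (by
        intro m hm i
        have hcond : ‖latticePt d lam m‖ ≤ R * (2:ℝ) ^ (t + 2) := by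
          by_contra hcond
          rw [hAt_def] at hm
          simp only [if_neg hcond] at hm
          exact hm rfl
        apply Nat.le_floor
        calc ((m i).natAbs : ℝ) ≤ lam * ‖latticePt d lam m‖ := latticePt_coord hlam0 m i
          _ ≤ lam * (R * (2:ℝ) ^ (t + 2)) := mul_le_mul_of_nonneg_left hcond hlam0.le)
      (by
        intro m
        simp only [hAt_def]
        split_ifs
        · exact le_refl _
        · exact zero_le)
    calc ENNReal.ofReal (lam ^ (-(d:ℝ))) * ∑' m, At t m
        ≤ ENNReal.ofReal (lam ^ (-(d:ℝ))) *
            (((2 * ⌊lam * (R * (2:ℝ) ^ (t + 2))⌋₊ + 1 : ℕ) : ℝ≥0∞) ^ d *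
              ENNReal.ofReal ((R * (2:ℝ) ^ t) ^ (-s))) :=
          mul_le_mul' le_rfl hcnt
      _ = ENNReal.ofReal (lam ^ (-(d:ℝ)) *
            (((2 * ⌊lam * (R * (2:ℝ) ^ (t + 2))⌋₊ + 1 : ℕ) : ℝ) ^ d *
              ((R * (2:ℝ) ^ t) ^ (-s)))) := by
          rw [← ENNReal.ofReal_natCast (2 * ⌊lam * (R * (2:ℝ) ^ (t + 2))⌋₊ + 1),
            ← ENNReal.ofReal_pow (Nat.cast_nonneg _),
            ← ENNReal.ofReal_mul (by positivity),
            ← ENNReal.ofReal_mul (by positivity)]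
      _ ≤ ENNReal.ofReal (cA * K ^ e * q ^ t) := by
          apply ENNReal.ofReal_le_ofReal
          calc lam ^ (-(d:ℝ)) * (((2 * ⌊lam * (R * (2:ℝ) ^ (t + 2))⌋₊ + 1 : ℕ) : ℝ) ^ d *
                ((R * (2:ℝ) ^ t) ^ (-s)))
              = lam ^ (-(d:ℝ)) * ((2 * ⌊lam * (R * (2:ℝ) ^ (t + 2))⌋₊ + 1 : ℕ) : ℝ) ^ d *
                ((R * (2:ℝ) ^ t) ^ (-s)) := by ring
            _ ≤ (3 / γ) ^ d * (R * (2:ℝ) ^ (t + 2)) ^ d * ((R * (2:ℝ) ^ t) ^ (-s)) :=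
                hmain ((2:ℝ) ^ (t + 2)) _ hx2 hRt0
            _ = cA * K ^ e * q ^ t := heqA t
      _ = ENNReal.ofReal (cA * K ^ e) * (ENNReal.ofReal q) ^ t := by
          rw [ENNReal.ofReal_mul (by positivity), ENNReal.ofReal_pow hq0]
  -- dyadic splitting of A
  have hsplitA : ∀ m, A m ≤ ∑' t : ℕ, At t m := by
    intro m
    simp only [hA_def]
    split_ifs with h
    · set x : ℝ := ‖latticePt d lam m‖ with hx_def
      have hx0 : 0 < x := lt_of_lt_of_le hR h
      set n : ℕ := ⌊x / R⌋₊ with hn_def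
      have hn1 : 1 ≤ n := by
        apply Nat.le_floor
        rw [Nat.cast_one]
        exact (one_le_div hR).mpr h
      set t : ℕ := Nat.log 2 n with ht_def
      have h2t : ((2:ℕ) ^ t : ℕ) ≤ n := Nat.pow_log_le_self 2 (by omega)
      have hn2 : n < 2 ^ (t + 1) := Nat.lt_pow_succ_log_self (by norm_num) n
      have hfl : (n : ℝ) ≤ x / R := Nat.floor_le (by positivity)
      have hlt : x / R < n + 1 := Nat.lt_floor_add_one _
      have hlow : R * (2:ℝ) ^ t ≤ x := by
        have h1 : ((2:ℝ) ^ t : ℝ) ≤ (n : ℝ) := by exact_mod_cast h2t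
        calc R * (2:ℝ) ^ t ≤ R * n := mul_le_mul_of_nonneg_left h1 hR.le
          _ ≤ R * (x / R) := mul_le_mul_of_nonneg_left hfl hR.le
          _ = x := by field_simp
      have hup : x ≤ R * (2:ℝ) ^ (t + 2) := by
        have h1 : ((n:ℝ) + 1) ≤ (2:ℝ) ^ (t + 1) := by
          have : n + 1 ≤ 2 ^ (t + 1) := hn2
          exact_mod_cast this
        have h2 : ((2:ℝ) ^ (t+1) : ℝ) ≤ (2:ℝ) ^ (t + 2) :=
          pow_le_pow_right₀ (by norm_num) (by omega)
        have h3 : x < R * ((n:ℝ) + 1) := by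
          have h4 := (div_lt_iff₀ hR).mp hlt
          linarith [h4]
        calc x ≤ R * ((n:ℝ) + 1) := h3.le
          _ ≤ R * (2:ℝ) ^ (t + 1) := mul_le_mul_of_nonneg_left h1 hR.le
          _ ≤ R * (2:ℝ) ^ (t + 2) := mul_le_mul_of_nonneg_left h2 hR.le
      have hvle : ENNReal.ofReal (x ^ (-s)) ≤ At t m := by
        simp only [hAt_def, ← hx_def, if_pos hup]
        apply ENNReal.ofReal_le_ofReal
        exact Real.rpow_le_rpow_of_nonpos (by positivity) hlow (by linarith)
      exact le_trans hvle (ENNReal.le_tsum t)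
    · exact zero_le
  -- total bound for the A part
  have hAle : ENNReal.ofReal (lam ^ (-(d:ℝ))) * ∑' m, A m
      ≤ ENNReal.ofReal (cA * K ^ e) * G := by
    calc ENNReal.ofReal (lam ^ (-(d:ℝ))) * ∑' m, A m
        ≤ ENNReal.ofReal (lam ^ (-(d:ℝ))) * ∑' m, ∑' t : ℕ, At t m :=
          mul_le_mul' le_rfl (ENNReal.tsum_le_tsum hsplitA)
      _ = ENNReal.ofReal (lam ^ (-(d:ℝ))) * ∑' t : ℕ, ∑' m, At t m := by
          rw [ENNReal.tsum_comm]
      _ = ∑' t : ℕ, ENNReal.ofReal (lam ^ (-(d:ℝ))) * ∑' m, At t m :=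
          ENNReal.tsum_mul_left.symm
      _ ≤ ∑' t : ℕ, ENNReal.ofReal (cA * K ^ e) * (ENNReal.ofReal q) ^ t :=
          ENNReal.tsum_le_tsum hAt
      _ = ENNReal.ofReal (cA * K ^ e) * ∑' t : ℕ, (ENNReal.ofReal q) ^ t :=
          ENNReal.tsum_mul_left
      _ = ENNReal.ofReal (cA * K ^ e) * G := by
          rw [ENNReal.tsum_geometric, hG_def]
  -- put everything together
  calc ENNReal.ofReal (lam ^ (-(d:ℝ))) * ∑' m : Fin d → ℤ,
        ENNReal.ofReal (‖latticePt d lam m‖ ^ β /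
          (‖latticePt d lam m‖ ^ (2 * θ) +
            ‖latticePt d lam km - latticePt d lam m‖ ^ (2 * θ) + C) ^ α)
      ≤ ENNReal.ofReal (lam ^ (-(d:ℝ))) * ∑' m, (B m + A m) :=
        mul_le_mul' le_rfl (ENNReal.tsum_le_tsum hpoint)
    _ = ENNReal.ofReal (lam ^ (-(d:ℝ))) * (∑' m, B m + ∑' m, A m) := by
        rw [ENNReal.tsum_add]
    _ = ENNReal.ofReal (lam ^ (-(d:ℝ))) * ∑' m, B m
          + ENNReal.ofReal (lam ^ (-(d:ℝ))) * ∑' m, A m := by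
        rw [mul_add]
    _ ≤ ENNReal.ofReal (cB * K ^ e) + ENNReal.ofReal (cA * K ^ e) * G :=
        add_le_add hBle hAle
    _ = (ENNReal.ofReal cB + ENNReal.ofReal cA * G) * ENNReal.ofReal (K ^ e) := by
        rw [ENNReal.ofReal_mul hcB0, ENNReal.ofReal_mul hcA0]
        ring
    _ ≤ (1 + ENNReal.ofReal cB + ENNReal.ofReal cA * G) * ENNReal.ofReal (K ^ e) := by
        apply mul_le_mul_left
        rw [add_assoc]
        exact le_add_of_nonneg_left (zero_le)
    _ = (1 + ENNReal.ofReal cB + ENNReal.ofReal cA * G) * ENNReal.ofReal K ^ e := by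
        rw [ENNReal.ofReal_rpow_of_pos hKpos]


/-- Riemann-sum bound, uniform in `λ ≥ 1`: for `θ > 0`, `d ≥ 1`, `β ≥ 0`, `C ≥ 0`,
`α > (d+β)/(2θ)`, and `k ∈ λ⁻¹ ℤ^d`,
`λ^{-d} ∑_{p ∈ λ⁻¹ℤ^d} |p|^β / (|p|^{2θ} + |k-p|^{2θ} + C)^α
  ≤ c (|k|^{2θ} + C)^{(β+d)/(2θ) - α}`. -/
theorem lattice_sum_bound
    (θ : ℝ) (hθ : 0 < θ) (d : ℕ) (hd : 1 ≤ d) (β C : ℝ) (hβ : 0 ≤ β) (hC : 0 ≤ C)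
    (α : ℝ) (hα : (d + β) / (2 * θ) < α) :
    ∃ c : ℝ≥0∞, c ≠ ⊤ ∧ ∀ lam : ℝ, 1 ≤ lam → ∀ km : Fin d → ℤ,
      (ENNReal.ofReal (lam ^ (-(d : ℝ)))) *
        ∑' m : Fin d → ℤ,
          (let p : EuclideanSpace ℝ (Fin d) :=
              (WithLp.equiv 2 (Fin d → ℝ)).symm fun i => (m i : ℝ) / lam
           let k : EuclideanSpace ℝ (Fin d) :=
              (WithLp.equiv 2 (Fin d → ℝ)).symm fun i => (km i : ℝ) / lam
           ENNReal.ofReal (‖p‖ ^ β / (‖p‖ ^ (2 * θ) + ‖k - p‖ ^ (2 * θ) + C) ^ α))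
      ≤ c * (ENNReal.ofReal
          (‖(WithLp.equiv 2 (Fin d → ℝ)).symm (fun i => (km i : ℝ) / lam)‖ ^ (2 * θ) + C))
            ^ ((β + d) / (2 * θ) - α) := by
  exact aux θ hθ d hd β C hβ hC α hα
end

section
/- Let A be a densely defined dissipative linear operator on a Hilbert space H, and suppose that for every φ₀ in a dense subset U ⊆ D(A) there exists a solution φ ∈ C(ℝ₊; D(A)) ∩ C¹(ℝ₊; H) of the Kolmogorov equation ∂_t φ(t) = A φ(t) with φ(0) = φ₀. Then: (i) any such solution is unique and satisfies ‖φ(t)‖ ≤ ‖φ₀‖ for all t ≥ 0; (ii) the maps T_t φ₀ := φ(t) extend uniquely to a strongly continuous semigroup of contractions (T_t)_{t≥0} on H; (iii) A is closable and its closure is the generator of (T_t); (iv) for every φ₀ ∈ U and t ≥ 0, A T_t φ₀ = T_t A φ₀. -/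
open Set Filter
open scoped RealInnerProductSpace Topology

set_option linter.unusedSectionVars false
set_option linter.unusedVariables false
set_option maxHeartbeats 1000000

/-- `φ` (with `ψ = A φ`) is a solution in `C(ℝ₊; D(A)) ∩ C¹(ℝ₊; H)` of the
Kolmogorov equation `∂ₜ φ = A φ` with initial condition `φ₀`. -/
def IsKolmogorovSolution {H : Type*} [NormedAddCommGroup H] [InnerProductSpace ℝ H]
    (A : H →ₗ.[ℝ] H) (φ₀ : H) (φ ψ : ℝ → H) : Prop :=
  φ 0 = φ₀ ∧ ContinuousOn φ (Ici (0 : ℝ)) ∧ ContinuousOn ψ (Ici (0 : ℝ)) ∧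
    ∀ t ∈ Ici (0 : ℝ), ∃ hmem : φ t ∈ A.domain,
      A ⟨φ t, hmem⟩ = ψ t ∧ HasDerivWithinAt φ (ψ t) (Ici (0 : ℝ)) t

section Aux
variable {H : Type*} [NormedAddCommGroup H] [InnerProductSpace ℝ H]
variable {A : H →ₗ.[ℝ] H}

namespace KolAux

theorem sol_sub {x x' : H} {φ ψ φ' ψ' : ℝ → H} (h : IsKolmogorovSolution A x φ ψ)
    (h' : IsKolmogorovSolution A x' φ' ψ') :
    IsKolmogorovSolution A (x - x') (fun t => φ t - φ' t) (fun t => ψ t - ψ' t) := by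
  obtain ⟨h0, hc, hd, hder⟩ := h
  obtain ⟨h0', hc', hd', hder'⟩ := h'
  refine ⟨by simp [h0, h0'], hc.sub hc', hd.sub hd', fun t ht => ?_⟩
  obtain ⟨m1, e1, d1⟩ := hder t ht
  obtain ⟨m2, e2, d2⟩ := hder' t ht
  refine ⟨sub_mem m1 m2, ?_, d1.sub d2⟩
  have : A (⟨φ t, m1⟩ - ⟨φ' t, m2⟩) = A ⟨φ t, m1⟩ - A ⟨φ' t, m2⟩ := A.map_sub _ _
  have h2 : (⟨φ t - φ' t, sub_mem m1 m2⟩ : A.domain) = ⟨φ t, m1⟩ - ⟨φ' t, m2⟩ := rfl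
  rw [h2, this, e1, e2]

theorem sol_add {x x' : H} {φ ψ φ' ψ' : ℝ → H} (h : IsKolmogorovSolution A x φ ψ)
    (h' : IsKolmogorovSolution A x' φ' ψ') :
    IsKolmogorovSolution A (x + x') (fun t => φ t + φ' t) (fun t => ψ t + ψ' t) := by
  obtain ⟨h0, hc, hd, hder⟩ := h
  obtain ⟨h0', hc', hd', hder'⟩ := h'
  refine ⟨by simp [h0, h0'], hc.add hc', hd.add hd', fun t ht => ?_⟩
  obtain ⟨m1, e1, d1⟩ := hder t ht
  obtain ⟨m2, e2, d2⟩ := hder' t ht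
  refine ⟨add_mem m1 m2, ?_, d1.add d2⟩
  have : A (⟨φ t, m1⟩ + ⟨φ' t, m2⟩) = A ⟨φ t, m1⟩ + A ⟨φ' t, m2⟩ := A.map_add _ _
  have h2 : (⟨φ t + φ' t, add_mem m1 m2⟩ : A.domain) = ⟨φ t, m1⟩ + ⟨φ' t, m2⟩ := rfl
  rw [h2, this, e1, e2]

theorem sol_smul {x : H} {φ ψ : ℝ → H} (c : ℝ) (h : IsKolmogorovSolution A x φ ψ) :
    IsKolmogorovSolution A (c • x) (fun t => c • φ t) (fun t => c • ψ t) := by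
  obtain ⟨h0, hc, hd, hder⟩ := h
  refine ⟨by simp [h0], hc.const_smul c, hd.const_smul c, fun t ht => ?_⟩
  obtain ⟨m1, e1, d1⟩ := hder t ht
  refine ⟨Submodule.smul_mem _ c m1, ?_, d1.const_smul c⟩
  have : A (c • (⟨φ t, m1⟩ : A.domain)) = c • A ⟨φ t, m1⟩ := A.map_smul c _
  have h2 : (⟨c • φ t, Submodule.smul_mem _ c m1⟩ : A.domain) = c • ⟨φ t, m1⟩ := rfl
  rw [h2, this, e1]

theorem sol_zero : IsKolmogorovSolution A (0 : H) (fun _ => 0) (fun _ => 0) := by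
  refine ⟨rfl, continuousOn_const, continuousOn_const, fun t ht => ?_⟩
  refine ⟨Submodule.zero_mem _, ?_, hasDerivWithinAt_const _ _ _⟩
  have h2 : (⟨(0:H), Submodule.zero_mem _⟩ : A.domain) = 0 := rfl
  rw [h2, A.map_zero]

theorem sol_norm_antitone (hdiss : ∀ φ : A.domain, ⟪(φ : H), A φ⟫ ≤ 0)
    {x : H} {φ ψ : ℝ → H} (h : IsKolmogorovSolution A x φ ψ) :
    AntitoneOn (fun t => ⟪φ t, φ t⟫) (Ici (0:ℝ)) := by
  obtain ⟨h0, hc, hd, hder⟩ := h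
  have hderiv : ∀ t ∈ interior (Ici (0:ℝ)), HasDerivAt (fun t => ⟪φ t, φ t⟫)
      (⟪φ t, ψ t⟫ + ⟪ψ t, φ t⟫) t := by
    intro t ht
    rw [interior_Ici] at ht
    obtain ⟨m, e, d⟩ := hder t (mem_Ici.2 (le_of_lt (mem_Ioi.1 ht)))
    have hder1 : HasDerivAt φ (ψ t) t :=
      d.hasDerivAt (Ici_mem_nhds ht)
    exact hder1.inner ℝ hder1
  refine antitoneOn_of_deriv_nonpos (convex_Ici 0) (hc.inner hc) ?_ ?_
  · intro t ht
    exact (hderiv t ht).differentiableAt.differentiableWithinAt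
  · intro t ht
    rw [(hderiv t ht).deriv]
    rw [interior_Ici] at ht
    obtain ⟨m, e, d⟩ := hder t (mem_Ici.2 (le_of_lt (mem_Ioi.1 ht)))
    have h1 : ⟪φ t, ψ t⟫ ≤ 0 := by
      rw [← e]; exact hdiss ⟨φ t, m⟩
    have h2 : ⟪ψ t, φ t⟫ = ⟪φ t, ψ t⟫ := real_inner_comm _ _
    linarith

theorem sol_norm_le (hdiss : ∀ φ : A.domain, ⟪(φ : H), A φ⟫ ≤ 0)
    {x : H} {φ ψ : ℝ → H} (h : IsKolmogorovSolution A x φ ψ) {t : ℝ} (ht : 0 ≤ t) :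
    ‖φ t‖ ≤ ‖x‖ := by
  have := sol_norm_antitone hdiss h (self_mem_Ici) ht ht
  change ⟪φ t, φ t⟫ ≤ ⟪φ 0, φ 0⟫ at this
  rw [h.1] at this
  rw [real_inner_self_eq_norm_sq, real_inner_self_eq_norm_sq] at this
  nlinarith [norm_nonneg (φ t), norm_nonneg x]

theorem sol_unique (hdiss : ∀ φ : A.domain, ⟪(φ : H), A φ⟫ ≤ 0)
    {x : H} {φ ψ φ' ψ' : ℝ → H} (h : IsKolmogorovSolution A x φ ψ)
    (h' : IsKolmogorovSolution A x φ' ψ') {t : ℝ} (ht : 0 ≤ t) : φ t = φ' t := by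
  have h2 := sol_norm_le hdiss (sol_sub h h') ht
  simp only [sub_self, norm_zero] at h2
  have := norm_nonneg (φ t - φ' t)
  have h3 : ‖φ t - φ' t‖ = 0 := le_antisymm h2 this
  rwa [norm_sub_eq_zero_iff] at h3

theorem sol_shift {x : H} {φ ψ : ℝ → H} (h : IsKolmogorovSolution A x φ ψ)
    {s : ℝ} (hs : 0 ≤ s) :
    IsKolmogorovSolution A (φ s) (fun r => φ (r + s)) (fun r => ψ (r + s)) := by
  obtain ⟨h0, hc, hd, hder⟩ := h
  have hmap : MapsTo (fun r : ℝ => r + s) (Ici (0:ℝ)) (Ici (0:ℝ)) := fun r hr => by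
    simp only [mem_Ici] at hr ⊢; linarith
  have hcont : ContinuousOn (fun r : ℝ => r + s) (Ici (0:ℝ)) :=
    (continuous_add_right s).continuousOn
  refine ⟨by simp, hc.comp hcont hmap, hd.comp hcont hmap, fun t ht => ?_⟩
  have hts : t + s ∈ Ici (0:ℝ) := hmap ht
  obtain ⟨m, e, d⟩ := hder (t + s) hts
  refine ⟨m, e, ?_⟩
  have hid : HasDerivWithinAt (fun r : ℝ => r + s) 1 (Ici (0:ℝ)) t :=
    ((hasDerivAt_id t).add_const s).hasDerivWithinAt
  have := d.scomp t hid hmap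
  simpa [Function.comp_def] using this

variable (A) in
/-- The set of initial data admitting a Kolmogorov solution, as a submodule. -/
def solSpace : Submodule ℝ H where
  carrier := {x | ∃ φ ψ : ℝ → H, IsKolmogorovSolution A x φ ψ}
  add_mem' := by
    rintro a b ⟨φ, ψ, h⟩ ⟨φ', ψ', h'⟩
    exact ⟨_, _, sol_add h h'⟩
  zero_mem' := ⟨_, _, sol_zero⟩
  smul_mem' := by
    rintro c a ⟨φ, ψ, h⟩
    exact ⟨_, _, sol_smul c h⟩

theorem mem_solSpace {x : H} : x ∈ solSpace A ↔ ∃ φ ψ : ℝ → H, IsKolmogorovSolution A x φ ψ :=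
  Iff.rfl

noncomputable def solφ {x : H} (hx : x ∈ solSpace A) : ℝ → H := hx.choose

noncomputable def solψ {x : H} (hx : x ∈ solSpace A) : ℝ → H := hx.choose_spec.choose

theorem sol_spec {x : H} (hx : x ∈ solSpace A) :
    IsKolmogorovSolution A x (solφ hx) (solψ hx) := hx.choose_spec.choose_spec

variable (A) in
noncomputable def solLinear (hdiss : ∀ φ : A.domain, ⟪(φ : H), A φ⟫ ≤ 0) (t : ℝ) :
    solSpace A →ₗ[ℝ] H where
  toFun ξ := solφ ξ.2 (max t 0)
  map_add' := by
    intro a b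
    exact sol_unique hdiss (sol_spec (a + b).2) (sol_add (sol_spec a.2) (sol_spec b.2))
      (le_max_right t 0)
  map_smul' := by
    intro c a
    exact sol_unique hdiss (sol_spec (c • a).2) (sol_smul c (sol_spec a.2)) (le_max_right t 0)

theorem solLinear_norm (hdiss : ∀ φ : A.domain, ⟪(φ : H), A φ⟫ ≤ 0) (t : ℝ)
    (ξ : solSpace A) : ‖solLinear A hdiss t ξ‖ ≤ 1 * ‖ξ‖ := by
  rw [one_mul]
  have := sol_norm_le hdiss (sol_spec ξ.2) (le_max_right t 0)
  rwa [show ‖(ξ : H)‖ = ‖ξ‖ from rfl] at this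

variable (A) in
noncomputable def solCLM (hdiss : ∀ φ : A.domain, ⟪(φ : H), A φ⟫ ≤ 0) (t : ℝ) :
    solSpace A →L[ℝ] H :=
  (solLinear A hdiss t).mkContinuous 1 (solLinear_norm hdiss t)

theorem denseRange_solSpace (hd : Dense (solSpace A : Set H)) :
    DenseRange ((solSpace A).subtypeL) := by
  have : Set.range ((solSpace A).subtypeL) = (solSpace A : Set H) := Subtype.range_coe
  rw [DenseRange, this]
  exact hd

theorem isUniformInducing_solSpace :
    IsUniformInducing ((solSpace A).subtypeL) :=
  isUniformEmbedding_subtype_val.isUniformInducing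

variable (A) in
noncomputable def Tsem [CompleteSpace H] (hdiss : ∀ φ : A.domain, ⟪(φ : H), A φ⟫ ≤ 0)
    (hd : Dense (solSpace A : Set H)) (t : ℝ) : H →L[ℝ] H :=
  (solCLM A hdiss t).extend (solSpace A).subtypeL

section T
variable [CompleteSpace H] (hdiss : ∀ φ : A.domain, ⟪(φ : H), A φ⟫ ≤ 0)
  (hd : Dense (solSpace A : Set H))

theorem Tsem_apply_mem {x : H} (hx : x ∈ solSpace A) (t : ℝ) :
    Tsem A hdiss hd t x = solφ hx (max t 0) := by
  have := ContinuousLinearMap.extend_eq (f := solCLM A hdiss t) (e := (solSpace A).subtypeL)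
    (denseRange_solSpace hd) isUniformInducing_solSpace ⟨x, hx⟩
  exact this

theorem Tsem_sol {x : H} {φ ψ : ℝ → H} (h : IsKolmogorovSolution A x φ ψ) {t : ℝ}
    (ht : 0 ≤ t) : φ t = Tsem A hdiss hd t x := by
  have hx : x ∈ solSpace A := ⟨_, _, h⟩
  rw [Tsem_apply_mem hdiss hd hx, max_eq_left ht]
  exact sol_unique hdiss h (sol_spec hx) ht

theorem Tsem_norm_apply (t : ℝ) (x : H) : ‖Tsem A hdiss hd t x‖ ≤ ‖x‖ := by
  have hcl : IsClosed {x : H | ‖Tsem A hdiss hd t x‖ ≤ ‖x‖} :=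
    isClosed_le ((Tsem A hdiss hd t).continuous.norm) continuous_norm
  have hsub : (solSpace A : Set H) ⊆ {x : H | ‖Tsem A hdiss hd t x‖ ≤ ‖x‖} := by
    intro x hx
    simp only [mem_setOf_eq]
    rw [Tsem_apply_mem hdiss hd hx]
    exact sol_norm_le hdiss (sol_spec hx) (le_max_right t 0)
  have := hcl.closure_subset_iff.2 hsub
  rw [hd.closure_eq] at this
  exact this (mem_univ x)

theorem Tsem_norm (t : ℝ) : ‖Tsem A hdiss hd t‖ ≤ 1 := by
  refine ContinuousLinearMap.opNorm_le_bound _ zero_le_one fun x => ?_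
  rw [one_mul]; exact Tsem_norm_apply hdiss hd t x

theorem Tsem_ext {f g : H →L[ℝ] H} {s : Set H} (hs : Dense s)
    (h : ∀ x ∈ s, f x = g x) : f = g := by
  ext x
  exact congrFun (Continuous.ext_on hs f.continuous g.continuous h) x

theorem Tsem_zero : Tsem A hdiss hd 0 = ContinuousLinearMap.id ℝ H := by
  refine Tsem_ext hd fun x hx => ?_
  rw [Tsem_apply_mem hdiss hd hx]
  simp only [max_self, ContinuousLinearMap.id_apply]
  exact (sol_spec hx).1

theorem Tsem_mem_solSpace {x : H} (hx : x ∈ solSpace A) {t : ℝ} (ht : 0 ≤ t) :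
    Tsem A hdiss hd t x ∈ solSpace A := by
  rw [Tsem_apply_mem hdiss hd hx, max_eq_left ht]
  exact ⟨_, _, sol_shift (sol_spec hx) ht⟩

theorem Tsem_add {s t : ℝ} (hs : 0 ≤ s) (ht : 0 ≤ t) :
    Tsem A hdiss hd (s + t) = (Tsem A hdiss hd s).comp (Tsem A hdiss hd t) := by
  refine Tsem_ext hd fun x hx => ?_
  have hsol := sol_spec hx
  have hshift := sol_shift hsol ht
  have h1 : solφ hx (s + t) = Tsem A hdiss hd s (solφ hx t) :=
    Tsem_sol hdiss hd hshift hs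
  have h2 : solφ hx t = Tsem A hdiss hd t x := Tsem_sol hdiss hd hsol ht
  have h3 : solφ hx (s + t) = Tsem A hdiss hd (s + t) x :=
    Tsem_sol hdiss hd hsol (by linarith)
  rw [ContinuousLinearMap.comp_apply, ← h2, ← h1, h3]

theorem Tsem_strong_cont (x : H) :
    ContinuousOn (fun t => Tsem A hdiss hd t x) (Ici (0:ℝ)) := by
  intro t₀ ht₀
  rw [Metric.continuousWithinAt_iff]
  intro ε hε
  obtain ⟨ξ, hξmem, hξ⟩ : ∃ ξ ∈ (solSpace A : Set H), dist x ξ < ε / 4 := by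
    have := Metric.mem_closure_iff.1 (by rw [hd.closure_eq]; exact mem_univ x)
    exact this (ε / 4) (by linarith)
  have hsol := sol_spec hξmem
  have hφc := hsol.2.1 t₀ ht₀
  rw [Metric.continuousWithinAt_iff] at hφc
  obtain ⟨δ, hδ, hφδ⟩ := hφc (ε / 4) (by linarith)
  refine ⟨δ, hδ, fun t ht hdist => ?_⟩
  have e1 : solφ hξmem t = Tsem A hdiss hd t ξ := Tsem_sol hdiss hd hsol ht
  have e2 : solφ hξmem t₀ = Tsem A hdiss hd t₀ ξ := Tsem_sol hdiss hd hsol ht₀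
  have b1 : dist (Tsem A hdiss hd t x) (Tsem A hdiss hd t ξ) ≤ dist x ξ := by
    rw [dist_eq_norm, dist_eq_norm, ← map_sub]
    exact Tsem_norm_apply hdiss hd t _
  have b2 : dist (Tsem A hdiss hd t₀ ξ) (Tsem A hdiss hd t₀ x) ≤ dist ξ x := by
    rw [dist_eq_norm, dist_eq_norm, ← map_sub]
    exact Tsem_norm_apply hdiss hd t₀ _
  have b3 := hφδ ht hdist
  rw [e1, e2] at b3
  have hd2 : dist ξ x = dist x ξ := dist_comm _ _
  calc dist (Tsem A hdiss hd t x) (Tsem A hdiss hd t₀ x)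
      ≤ dist (Tsem A hdiss hd t x) (Tsem A hdiss hd t ξ)
        + dist (Tsem A hdiss hd t ξ) (Tsem A hdiss hd t₀ ξ)
        + dist (Tsem A hdiss hd t₀ ξ) (Tsem A hdiss hd t₀ x) := dist_triangle4 _ _ _ _
    _ < ε := by linarith

end T

section T2
variable [CompleteSpace H] (hdiss : ∀ φ : A.domain, ⟪(φ : H), A φ⟫ ≤ 0)
  (hd : Dense (solSpace A : Set H))

/-- Right-sided difference quotients of a solution converge to `ψ t`. -/
theorem sol_right_slope {x : H} {φ ψ : ℝ → H} (h : IsKolmogorovSolution A x φ ψ) {t : ℝ}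
    (ht : 0 ≤ t) :
    Tendsto (fun h : ℝ => h⁻¹ • (φ (t + h) - φ t)) (𝓝[>] (0:ℝ)) (𝓝 (ψ t)) := by
  obtain ⟨m, e, d⟩ := h.2.2.2 t ht
  rw [hasDerivWithinAt_iff_tendsto_slope] at d
  have hmap : Tendsto (fun h : ℝ => t + h) (𝓝[>] (0:ℝ)) (𝓝[Ici 0 \ {t}] t) := by
    refine tendsto_nhdsWithin_of_tendsto_nhds_of_eventually_within _ ?_ ?_
    · have : Tendsto (fun h : ℝ => t + h) (𝓝 (0:ℝ)) (𝓝 t) := by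
        simpa using (continuous_add_left t).tendsto (0:ℝ)
      exact this.mono_left nhdsWithin_le_nhds
    · filter_upwards [self_mem_nhdsWithin] with h hh
      have hh' : (0:ℝ) < h := hh
      constructor
      · simp only [mem_Ici]; linarith
      · simp only [mem_singleton_iff]; intro hc; linarith
  have := d.comp hmap
  refine this.congr fun h => ?_
  simp [slope_def_module]

/-- `ψ t = T t (ψ 0)` for any solution. -/
theorem sol_psi_eq {x : H} {φ ψ : ℝ → H} (h : IsKolmogorovSolution A x φ ψ) {t : ℝ}
    (ht : 0 ≤ t) : ψ t = Tsem A hdiss hd t (ψ 0) := by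
  have hx : x ∈ solSpace A := ⟨_, _, h⟩
  have key : ∀ᶠ s in 𝓝[>] (0:ℝ),
      s⁻¹ • (φ (t + s) - φ t) = Tsem A hdiss hd t (s⁻¹ • (φ s - φ 0)) := by
    filter_upwards [self_mem_nhdsWithin] with s hs
    have hs' : (0:ℝ) < s := hs
    have e1 : φ (t + s) = Tsem A hdiss hd (t + s) x := Tsem_sol hdiss hd h (by linarith)
    have e2 : φ t = Tsem A hdiss hd t x := Tsem_sol hdiss hd h ht
    have e3 : φ s = Tsem A hdiss hd s x := Tsem_sol hdiss hd h hs'.le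
    have e4 : Tsem A hdiss hd (t + s) = (Tsem A hdiss hd t).comp (Tsem A hdiss hd s) :=
      Tsem_add hdiss hd ht hs'.le
    rw [e1, e2, e3, h.1, e4, map_smul, map_sub]
    rfl
  have lim1 : Tendsto (fun s : ℝ => s⁻¹ • (φ (t + s) - φ t)) (𝓝[>] (0:ℝ)) (𝓝 (ψ t)) :=
    sol_right_slope h ht
  have lim2 : Tendsto (fun s : ℝ => Tsem A hdiss hd t (s⁻¹ • (φ s - φ 0)))
      (𝓝[>] (0:ℝ)) (𝓝 (Tsem A hdiss hd t (ψ 0))) :=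
    ((Tsem A hdiss hd t).continuous.tendsto _).comp (by simpa using sol_right_slope h le_rfl)
  exact tendsto_nhds_unique (lim1.congr' key) lim2

variable (A) in
/-- The generator relation. -/
def Bdom (hdiss : ∀ φ : A.domain, ⟪(φ : H), A φ⟫ ≤ 0)
    (hd : Dense (solSpace A : Set H)) (x y : H) : Prop :=
  Tendsto (fun t : ℝ => t⁻¹ • (Tsem A hdiss hd t x - x)) (𝓝[>] (0:ℝ)) (𝓝 y)

theorem Bdom_of_mem {x : H} (hx : x ∈ solSpace A) :
    Bdom A hdiss hd x (solψ hx 0) := by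
  have h := sol_spec hx
  have := sol_right_slope (A := A) h le_rfl
  refine Tendsto.congr' ?_ (by simpa using this)
  filter_upwards [self_mem_nhdsWithin] with s hs
  have hs' : (0:ℝ) < s := hs
  rw [Tsem_sol hdiss hd h hs'.le, h.1]

theorem Bdom_sub {x y x' y' : H} (h : Bdom A hdiss hd x y) (h' : Bdom A hdiss hd x' y') :
    Bdom A hdiss hd (x - x') (y - y') := by
  have := h.sub h'
  refine Tendsto.congr (fun t => ?_) this
  simp only [map_sub, smul_sub]
  abel

theorem Bdom_unique {x y y' : H} (h : Bdom A hdiss hd x y) (h' : Bdom A hdiss hd x y') :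
    y = y' := tendsto_nhds_unique h h'

theorem Bdom_dissip {x y : H} (h : Bdom A hdiss hd x y) : ⟪x, y⟫ ≤ 0 := by
  have lim : Tendsto (fun t : ℝ => ⟪x, t⁻¹ • (Tsem A hdiss hd t x - x)⟫)
      (𝓝[>] (0:ℝ)) (𝓝 ⟪x, y⟫) :=
    Tendsto.inner tendsto_const_nhds h
  refine le_of_tendsto lim ?_
  filter_upwards [self_mem_nhdsWithin] with t ht
  have ht' : (0:ℝ) < t := ht
  rw [real_inner_smul_right, inner_sub_right]
  have h1 : ⟪x, Tsem A hdiss hd t x⟫ ≤ ‖x‖ * ‖Tsem A hdiss hd t x‖ := real_inner_le_norm _ _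
  have h2 : ‖Tsem A hdiss hd t x‖ ≤ ‖x‖ := Tsem_norm_apply hdiss hd t x
  have h3 : ⟪x, x⟫ = ‖x‖ ^ 2 := real_inner_self_eq_norm_sq x
  have h4 : ⟪x, Tsem A hdiss hd t x⟫ - ⟪x, x⟫ ≤ 0 := by nlinarith [norm_nonneg x]
  have := inv_nonneg.2 ht'.le
  exact mul_nonpos_of_nonneg_of_nonpos this h4

end T2

section T3
variable [CompleteSpace H] (hdiss : ∀ φ : A.domain, ⟪(φ : H), A φ⟫ ≤ 0)
  (hd : Dense (solSpace A : Set H))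

theorem mem_domain_of_solSpace {x : H} (hx : x ∈ solSpace A) : x ∈ A.domain := by
  obtain ⟨m, e, d⟩ := (sol_spec hx).2.2.2 0 self_mem_Ici
  rwa [(sol_spec hx).1] at m

theorem Aval_eq_solψ {x : H} (hx : x ∈ solSpace A) (hm : x ∈ A.domain) :
    A ⟨x, hm⟩ = solψ hx 0 := by
  obtain ⟨m, e, d⟩ := (sol_spec hx).2.2.2 0 self_mem_Ici
  have h2 : (⟨x, hm⟩ : A.domain) = ⟨solφ hx 0, m⟩ := Subtype.ext (sol_spec hx).1.symm
  rw [h2, e]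

theorem Tsem_integral_rep {x : H} (hx : x ∈ solSpace A) {t : ℝ} (ht : 0 ≤ t) :
    Tsem A hdiss hd t x - x = ∫ s in (0:ℝ)..t, Tsem A hdiss hd s (solψ hx 0) := by
  have h := sol_spec hx
  have hIcc : Icc (0:ℝ) t ⊆ Ici 0 := Icc_subset_Ici_self
  have hFTC := intervalIntegral.integral_eq_sub_of_hasDeriv_right_of_le ht
    (h.2.1.mono hIcc)
    (fun s hs => ((h.2.2.2 s hs.1.le).2.2).mono
      ((Ioi_subset_Ici_self).trans (Ici_subset_Ici.2 hs.1.le)))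
    (((h.2.2.1.mono (by rw [uIcc_of_le ht]; exact hIcc))).intervalIntegrable)
  have hcongr : ∀ s ∈ uIcc (0:ℝ) t, solψ hx s = Tsem A hdiss hd s (solψ hx 0) := by
    intro s hs
    rw [uIcc_of_le ht] at hs
    exact sol_psi_eq hdiss hd h hs.1
  rw [intervalIntegral.integral_congr hcongr] at hFTC
  rw [hFTC, ← Tsem_sol hdiss hd h ht, h.1]

theorem Bdom_of_integral_rep {x y : H}
    (hrep : ∀ t : ℝ, 0 ≤ t →
      Tsem A hdiss hd t x - x = ∫ s in (0:ℝ)..t, Tsem A hdiss hd s y) :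
    Bdom A hdiss hd x y := by
  rw [Bdom, Metric.tendsto_nhdsWithin_nhds]
  intro ε hε
  have hconty : ContinuousWithinAt (fun s => Tsem A hdiss hd s y) (Ici (0:ℝ)) 0 :=
    Tsem_strong_cont hdiss hd y 0 self_mem_Ici
  rw [Metric.continuousWithinAt_iff] at hconty
  obtain ⟨δ, hδ, hcont⟩ := hconty (ε / 2) (by linarith)
  refine ⟨δ, hδ, fun {t} htmem hdist => ?_⟩
  have ht : (0:ℝ) < t := htmem
  have htδ : t < δ := by
    rw [Real.dist_eq, sub_zero, abs_of_pos ht] at hdist; exact hdist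
  have hint1 : IntervalIntegrable (fun s => Tsem A hdiss hd s y) MeasureTheory.volume 0 t :=
    ((Tsem_strong_cont hdiss hd y).mono (by rw [uIcc_of_le ht.le]; exact Icc_subset_Ici_self)).intervalIntegrable
  have hsub : (∫ s in (0:ℝ)..t, (Tsem A hdiss hd s y - y))
      = (Tsem A hdiss hd t x - x) - t • y := by
    rw [intervalIntegral.integral_sub hint1 intervalIntegrable_const,
      intervalIntegral.integral_const, hrep t ht.le]
    simp
  have hbound : ‖∫ s in (0:ℝ)..t, (Tsem A hdiss hd s y - y)‖ ≤ (ε / 2) * |t - 0| := by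
    refine intervalIntegral.norm_integral_le_of_norm_le_const fun s hs => ?_
    rw [uIoc_of_le ht.le] at hs
    have hs0 : (0:ℝ) ≤ s := hs.1.le
    have hsd : dist s 0 < δ := by
      rw [Real.dist_eq, sub_zero, abs_of_nonneg hs0]; linarith [hs.2]
    have := hcont hs0 hsd
    rw [dist_eq_norm] at this
    have hT0 : Tsem A hdiss hd 0 y = y := by rw [Tsem_zero hdiss hd]; rfl
    rw [hT0] at this
    exact this.le
  have hkey : t⁻¹ • (∫ s in (0:ℝ)..t, (Tsem A hdiss hd s y - y))
      = t⁻¹ • (Tsem A hdiss hd t x - x) - y := by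
    rw [hsub, smul_sub, smul_smul, inv_mul_cancel₀ (ne_of_gt ht), one_smul]
  rw [dist_eq_norm, ← hkey]
  rw [norm_smul, norm_inv, Real.norm_eq_abs, abs_of_pos ht]
  calc t⁻¹ * ‖∫ s in (0:ℝ)..t, (Tsem A hdiss hd s y - y)‖
      ≤ t⁻¹ * ((ε / 2) * |t - 0|) := by
        exact mul_le_mul_of_nonneg_left hbound (inv_nonneg.2 ht.le)
    _ = ε / 2 := by
        rw [sub_zero, abs_of_pos ht]
        field_simp
    _ < ε := by linarith

end T3

section T4
variable [CompleteSpace H] (hdiss : ∀ φ : A.domain, ⟪(φ : H), A φ⟫ ≤ 0)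
  (hd : Dense (solSpace A : Set H))

variable (A) in
noncomputable def jmap : solSpace A →ₗ[ℝ] H × H where
  toFun ξ := (ξ.1, A ⟨ξ.1, mem_domain_of_solSpace ξ.2⟩)
  map_add' a b := by
    refine Prod.ext rfl ?_
    show A ⟨a.1 + b.1, _⟩ = A ⟨a.1, _⟩ + A ⟨b.1, _⟩
    rw [show (⟨a.1 + b.1, mem_domain_of_solSpace (a + b).2⟩ : A.domain)
      = ⟨a.1, mem_domain_of_solSpace a.2⟩ + ⟨b.1, mem_domain_of_solSpace b.2⟩ from rfl,
      A.map_add]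
  map_smul' c a := by
    refine Prod.ext rfl ?_
    show A ⟨c • a.1, _⟩ = c • A ⟨a.1, _⟩
    rw [show (⟨c • a.1, mem_domain_of_solSpace (c • a).2⟩ : A.domain)
      = c • ⟨a.1, mem_domain_of_solSpace a.2⟩ from rfl, A.map_smul]

variable (A) in
noncomputable def Gcl : Submodule ℝ (H × H) := (LinearMap.range (jmap A)).topologicalClosure

theorem mem_range_jmap {p : H × H} (hp : p ∈ LinearMap.range (jmap A)) :
    ∃ hx : p.1 ∈ solSpace A, A ⟨p.1, mem_domain_of_solSpace hx⟩ = p.2 := by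
  obtain ⟨ξ, hξ⟩ := hp
  subst hξ
  exact ⟨ξ.2, rfl⟩

theorem sol_pair_mem_range {x : H} {φ ψ : ℝ → H} (h : IsKolmogorovSolution A x φ ψ)
    {t : ℝ} (ht : 0 ≤ t) : (φ t, ψ t) ∈ LinearMap.range (jmap A) := by
  have hmem : φ t ∈ solSpace A := ⟨_, _, sol_shift h ht⟩
  obtain ⟨m, e, d⟩ := h.2.2.2 t ht
  exact ⟨⟨φ t, hmem⟩, Prod.ext rfl e⟩

theorem range_jmap_le_graph : LinearMap.range (jmap A) ≤ A.graph := by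
  rintro p ⟨ξ, rfl⟩
  rw [LinearPMap.mem_graph_iff]
  exact ⟨⟨ξ.1, mem_domain_of_solSpace ξ.2⟩, rfl, rfl⟩

theorem Gcl_integral_rep {x y : H} (hxy : (x, y) ∈ Gcl A) {t : ℝ} (ht : 0 ≤ t) :
    Tsem A hdiss hd t x - x = ∫ s in (0:ℝ)..t, Tsem A hdiss hd s y := by
  have hxy' : (x, y) ∈ closure (LinearMap.range (jmap A) : Set (H × H)) := hxy
  rw [mem_closure_iff_seq_limit] at hxy'
  obtain ⟨p, hpmem, hp⟩ := hxy'
  have h1 : Tendsto (fun n => (p n).1) atTop (𝓝 x) := (continuous_fst.tendsto _).comp hp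
  have h2 : Tendsto (fun n => (p n).2) atTop (𝓝 y) := (continuous_snd.tendsto _).comp hp
  have hrep : ∀ n, Tsem A hdiss hd t (p n).1 - (p n).1
      = ∫ s in (0:ℝ)..t, Tsem A hdiss hd s (p n).2 := by
    intro n
    obtain ⟨hx, he⟩ := mem_range_jmap (hpmem n)
    have := Tsem_integral_rep hdiss hd hx ht
    rwa [← Aval_eq_solψ hx (mem_domain_of_solSpace hx), he] at this
  have lim1 : Tendsto (fun n => Tsem A hdiss hd t (p n).1 - (p n).1) atTop
      (𝓝 (Tsem A hdiss hd t x - x)) :=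
    (((Tsem A hdiss hd t).continuous.tendsto _).comp h1).sub h1
  have lim2 : Tendsto (fun n => ∫ s in (0:ℝ)..t, Tsem A hdiss hd s (p n).2) atTop
      (𝓝 (∫ s in (0:ℝ)..t, Tsem A hdiss hd s y)) := by
    rw [tendsto_iff_norm_sub_tendsto_zero]
    have hbd : ∀ n, ‖(∫ s in (0:ℝ)..t, Tsem A hdiss hd s (p n).2)
        - ∫ s in (0:ℝ)..t, Tsem A hdiss hd s y‖ ≤ ‖(p n).2 - y‖ * t := by
      intro n
      have hint1 : IntervalIntegrable (fun s => Tsem A hdiss hd s (p n).2)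
          MeasureTheory.volume 0 t :=
        ((Tsem_strong_cont hdiss hd _).mono
          (by rw [uIcc_of_le ht]; exact Icc_subset_Ici_self)).intervalIntegrable
      have hint2 : IntervalIntegrable (fun s => Tsem A hdiss hd s y)
          MeasureTheory.volume 0 t :=
        ((Tsem_strong_cont hdiss hd _).mono
          (by rw [uIcc_of_le ht]; exact Icc_subset_Ici_self)).intervalIntegrable
      rw [← intervalIntegral.integral_sub hint1 hint2]
      have hb : ∀ s ∈ Set.uIoc (0:ℝ) t, ‖Tsem A hdiss hd s (p n).2 - Tsem A hdiss hd s y‖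
          ≤ ‖(p n).2 - y‖ := by
        intro s hs
        rw [← map_sub]
        exact Tsem_norm_apply hdiss hd s _
      have := intervalIntegral.norm_integral_le_of_norm_le_const hb
      rwa [sub_zero, abs_of_nonneg ht] at this
    refine squeeze_zero (fun n => norm_nonneg _) hbd ?_
    have : Tendsto (fun n => ‖(p n).2 - y‖) atTop (𝓝 0) := by
      rw [← tendsto_iff_norm_sub_tendsto_zero]
      exact h2
    simpa using this.mul_const t
  have := lim1.congr hrep
  exact tendsto_nhds_unique this lim2

theorem Bdom_of_Gcl {x y : H} (hxy : (x, y) ∈ Gcl A) : Bdom A hdiss hd x y := by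
  exact Bdom_of_integral_rep hdiss hd fun t ht => Gcl_integral_rep hdiss hd hxy ht

include hdiss hd in
theorem Gcl_dissip {x y : H} (hxy : (x, y) ∈ Gcl A) : ⟪x, y⟫ ≤ 0 :=
  Bdom_dissip hdiss hd (Bdom_of_Gcl hdiss hd hxy)

variable (A) in
noncomputable def Rsub : Submodule ℝ H :=
  Submodule.map (LinearMap.fst ℝ H H - LinearMap.snd ℝ H H) (Gcl A)

end T4
section T5
variable [CompleteSpace H]

theorem Rsub_orthogonal_eq_bot (hdiss : ∀ φ : A.domain, ⟪(φ : H), A φ⟫ ≤ 0)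
    (hd : Dense (solSpace A : Set H)) (U : Set H) (hUsub : ∀ u ∈ U, u ∈ solSpace A)
    (hUdense : Dense U) : (Rsub A)ᗮ = ⊥ := by
  rw [Submodule.eq_bot_iff]
  intro v hv
  rw [Submodule.mem_orthogonal] at hv
  -- v is orthogonal to φ t - ψ t for every solution
  have horth : ∀ {x : H} (hx : x ∈ solSpace A) {t : ℝ}, 0 ≤ t →
      ⟪solφ hx t - solψ hx t, v⟫ = 0 := by
    intro x hx t ht
    refine hv _ ?_
    refine ⟨(solφ hx t, solψ hx t), ?_, by simp⟩
    exact Submodule.le_topologicalClosure _ (sol_pair_mem_range (sol_spec hx) ht)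
  have hzero : ∀ u ∈ U, ⟪v, u⟫ = 0 := by
    intro u hu
    have hx : u ∈ solSpace A := hUsub u hu
    set φ := solφ hx
    set ψ := solψ hx
    have hsol := sol_spec hx
    have hφ0 : φ 0 = u := hsol.1
    set g : ℝ → ℝ := fun t => Real.exp (-t) * ⟪v, φ t⟫ with hg
    have hgderiv : ∀ t ∈ interior (Ici (0:ℝ)), HasDerivAt g 0 t := by
      intro t htint
      rw [interior_Ici] at htint
      obtain ⟨m, e, d⟩ := hsol.2.2.2 t (mem_Ici.2 (le_of_lt (mem_Ioi.1 htint)))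
      have hdφ : HasDerivAt φ (ψ t) t := d.hasDerivAt (Ici_mem_nhds htint)
      have hdinner : HasDerivAt (fun t => ⟪v, φ t⟫) ⟪v, ψ t⟫ t := by
        have := (hasDerivAt_const t v).inner ℝ hdφ
        simpa using this
      have hdexp : HasDerivAt (fun t : ℝ => Real.exp (-t)) (-Real.exp (-t)) t := by
        have h1 : HasDerivAt (fun t : ℝ => -t) (-1) t := (hasDerivAt_id t).neg
        have := (Real.hasDerivAt_exp (-t)).comp t h1
        simpa [Function.comp_def] using this
      have := hdexp.mul hdinner
      have horth2 : ⟪v, φ t⟫ = ⟪v, ψ t⟫ := by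
        have h0 := horth hx (le_of_lt htint)
        change ⟪φ t - ψ t, v⟫ = 0 at h0
        rw [real_inner_comm, inner_sub_right] at h0
        linarith
      have hval : -Real.exp (-t) * ⟪v, φ t⟫ + Real.exp (-t) * ⟪v, ψ t⟫ = 0 := by
        rw [horth2]; ring
      rwa [hval] at this
    have hgcont : ContinuousOn g (Ici (0:ℝ)) :=
      ((Real.continuous_exp.comp continuous_neg).continuousOn).mul
        (continuousOn_const.inner hsol.2.1)
    have hconst : ∀ t : ℝ, 0 ≤ t → g t = g 0 := by
      intro t ht
      have h1 : AntitoneOn g (Ici (0:ℝ)) := by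
        refine antitoneOn_of_deriv_nonpos (convex_Ici 0) hgcont
          (fun s hs => (hgderiv s hs).differentiableAt.differentiableWithinAt) ?_
        intro s hs
        rw [(hgderiv s hs).deriv]
      have h2 : AntitoneOn (fun t => -g t) (Ici (0:ℝ)) := by
        refine antitoneOn_of_deriv_nonpos (convex_Ici 0) hgcont.neg
          (fun s hs => ((hgderiv s hs).neg).differentiableAt.differentiableWithinAt) ?_
        intro s hs
        rw [show (fun t => -g t) = -g from rfl, ((hgderiv s hs).neg).deriv]
        simp
      have ha := h1 self_mem_Ici ht ht
      have hb := h2 self_mem_Ici ht ht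
      simp only [neg_le_neg_iff] at hb
      linarith
    -- g tends to 0 at infinity
    have hbound : ∀ᶠ t in atTop, ‖g t‖ ≤ Real.exp (-t) * (‖v‖ * ‖u‖) := by
      filter_upwards [eventually_ge_atTop (0:ℝ)] with t ht
      rw [hg]
      simp only [Real.norm_eq_abs, abs_mul, abs_of_pos (Real.exp_pos (-t))]
      have h1 : |⟪v, φ t⟫| ≤ ‖v‖ * ‖φ t‖ := abs_real_inner_le_norm _ _
      have h2 : ‖φ t‖ ≤ ‖u‖ := sol_norm_le hdiss hsol ht
      have hexp := Real.exp_pos (-t)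
      calc Real.exp (-t) * |⟪v, φ t⟫| ≤ Real.exp (-t) * (‖v‖ * ‖φ t‖) :=
            mul_le_mul_of_nonneg_left h1 hexp.le
        _ ≤ Real.exp (-t) * (‖v‖ * ‖u‖) :=
            mul_le_mul_of_nonneg_left
              (mul_le_mul_of_nonneg_left h2 (norm_nonneg v)) hexp.le
    have hgtends : Tendsto g atTop (𝓝 0) := by
      refine squeeze_zero_norm' hbound ?_
      have := Real.tendsto_exp_neg_atTop_nhds_zero.mul_const (‖v‖ * ‖u‖)
      simpa using this
    have hgconst : Tendsto g atTop (𝓝 (g 0)) := by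
      refine Tendsto.congr' ?_ tendsto_const_nhds
      filter_upwards [eventually_ge_atTop (0:ℝ)] with t ht
      exact (hconst t ht).symm
    have h0 := tendsto_nhds_unique hgconst hgtends
    have : g 0 = ⟪v, u⟫ := by
      rw [hg]; simp [hφ0]
    rw [this] at h0
    exact h0
  -- conclude v = 0
  have hfun : (fun w => ⟪v, w⟫) = fun _ => (0:ℝ) := by
    refine Continuous.ext_on hUdense ?_ continuous_const ?_
    · exact continuous_const.inner continuous_id
    · exact hzero
  have : ⟪v, v⟫ = 0 := congrFun hfun v
  exact inner_self_eq_zero.1 this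

theorem Rsub_isClosed (hdiss : ∀ φ : A.domain, ⟪(φ : H), A φ⟫ ≤ 0)
    (hd : Dense (solSpace A : Set H)) : IsClosed (Rsub A : Set H) := by
  refine IsSeqClosed.isClosed ?_
  intro w wl hwmem hwlim
  choose p hpmem hpw using hwmem
  have hdiff : ∀ n m : ℕ, ‖(p n).1 - (p m).1‖ ≤ ‖w n - w m‖ ∧
      ‖(p n).2 - (p m).2‖ ≤ ‖w n - w m‖ := by
    intro n m
    have hmem : (p n - p m) ∈ Gcl A := Submodule.sub_mem _ (hpmem n) (hpmem m)
    have hdis : ⟪(p n - p m).1, (p n - p m).2⟫ ≤ 0 := Gcl_dissip hdiss hd hmem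
    have hw : w n - w m = (p n).1 - (p m).1 - ((p n).2 - (p m).2) := by
      rw [← hpw n, ← hpw m]
      simp only [LinearMap.sub_apply, LinearMap.fst_apply, LinearMap.snd_apply]
      abel
    set a := (p n).1 - (p m).1
    set b := (p n).2 - (p m).2
    have hab : ⟪a, b⟫ ≤ 0 := hdis
    have hnorm : ‖w n - w m‖ ^ 2 = ‖a‖ ^ 2 - 2 * ⟪a, b⟫ + ‖b‖ ^ 2 := by
      rw [hw, ← real_inner_self_eq_norm_sq, ← real_inner_self_eq_norm_sq,
        ← real_inner_self_eq_norm_sq, inner_sub_sub_self, real_inner_comm b a]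
      ring
    constructor
    · nlinarith [norm_nonneg (w n - w m), norm_nonneg a, norm_nonneg b]
    · nlinarith [norm_nonneg (w n - w m), norm_nonneg a, norm_nonneg b]
  have hwC : CauchySeq w := hwlim.cauchySeq
  have hC1 : CauchySeq (fun n => (p n).1) := by
    rw [Metric.cauchySeq_iff] at hwC ⊢
    intro ε hε
    obtain ⟨N, hN⟩ := hwC ε hε
    refine ⟨N, fun n hn m hm => ?_⟩
    have := hN n hn m hm
    rw [dist_eq_norm] at this ⊢
    exact lt_of_le_of_lt ((hdiff n m).1) this
  have hC2 : CauchySeq (fun n => (p n).2) := by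
    rw [Metric.cauchySeq_iff] at hwC ⊢
    intro ε hε
    obtain ⟨N, hN⟩ := hwC ε hε
    refine ⟨N, fun n hn m hm => ?_⟩
    have := hN n hn m hm
    rw [dist_eq_norm] at this ⊢
    exact lt_of_le_of_lt ((hdiff n m).2) this
  obtain ⟨xl, hxl⟩ := cauchySeq_tendsto_of_complete hC1
  obtain ⟨yl, hyl⟩ := cauchySeq_tendsto_of_complete hC2
  have hplim : Tendsto p atTop (𝓝 (xl, yl)) := hxl.prodMk_nhds hyl
  have hpin : (xl, yl) ∈ Gcl A := by
    have hcl : IsClosed (Gcl A : Set (H × H)) := Submodule.isClosed_topologicalClosure _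
    exact hcl.mem_of_tendsto hplim (Eventually.of_forall hpmem)
  have hwlim' : Tendsto w atTop (𝓝 (xl - yl)) := by
    have := hxl.sub hyl
    refine Tendsto.congr (fun n => ?_) this
    rw [← hpw n]
    simp [LinearMap.sub_apply]
  have : wl = xl - yl := tendsto_nhds_unique hwlim hwlim'
  rw [this]
  exact ⟨(xl, yl), hpin, by simp⟩

theorem Rsub_eq_top (hdiss : ∀ φ : A.domain, ⟪(φ : H), A φ⟫ ≤ 0)
    (hd : Dense (solSpace A : Set H)) (U : Set H) (hUsub : ∀ u ∈ U, u ∈ solSpace A)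
    (hUdense : Dense U) : Rsub A = ⊤ := by
  have h1 : (Rsub A).topologicalClosure = ⊤ :=
    Submodule.topologicalClosure_eq_top_iff.2 (Rsub_orthogonal_eq_bot hdiss hd U hUsub hUdense)
  rwa [(Rsub_isClosed hdiss hd (A := A)).submodule_topologicalClosure_eq] at h1

theorem Bdom_mem_Gcl (hdiss : ∀ φ : A.domain, ⟪(φ : H), A φ⟫ ≤ 0)
    (hd : Dense (solSpace A : Set H)) (U : Set H) (hUsub : ∀ u ∈ U, u ∈ solSpace A) (hUdense : Dense U)
    {x y : H} (h : Bdom A hdiss hd x y) : (x, y) ∈ Gcl A := by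
  have htop := Rsub_eq_top hdiss hd U hUsub hUdense
  have hmem : x - y ∈ Rsub A := by rw [htop]; trivial
  obtain ⟨p, hp, hpxy⟩ := hmem
  simp only [LinearMap.sub_apply, LinearMap.fst_apply, LinearMap.snd_apply] at hpxy
  have hB : Bdom A hdiss hd p.1 p.2 := Bdom_of_Gcl hdiss hd (by simpa using hp)
  have hsub : Bdom A hdiss hd (x - p.1) (y - p.2) := Bdom_sub hdiss hd h hB
  have hdis : ⟪x - p.1, y - p.2⟫ ≤ 0 := Bdom_dissip hdiss hd hsub
  have heq : x - p.1 = y - p.2 := sub_eq_sub_iff_sub_eq_sub.1 hpxy.symm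
  rw [heq] at hdis
  have h0 : y - p.2 = 0 := by
    have := real_inner_self_nonneg (x := y - p.2)
    have h1 : ⟪y - p.2, y - p.2⟫ = 0 := le_antisymm hdis this
    exact inner_self_eq_zero.1 h1
  have h0' : x - p.1 = 0 := by rw [heq, h0]
  have hx : x = p.1 := by rwa [sub_eq_zero] at h0'
  have hy : y = p.2 := by rwa [sub_eq_zero] at h0
  rw [hx, hy]
  simpa using hp

end T5

section T6
variable [CompleteSpace H]

theorem graph_closure_dissip (hdiss : ∀ φ : A.domain, ⟪(φ : H), A φ⟫ ≤ 0)
    {p : H × H} (hp : p ∈ (A.graph).topologicalClosure) : ⟪p.1, p.2⟫ ≤ 0 := by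
  have hp' : p ∈ closure (A.graph : Set (H × H)) := hp
  rw [mem_closure_iff_seq_limit] at hp'
  obtain ⟨q, hqmem, hq⟩ := hp'
  have hlim : Tendsto (fun n => ⟪(q n).1, (q n).2⟫) atTop (𝓝 ⟪p.1, p.2⟫) :=
    Tendsto.inner ((continuous_fst.tendsto _).comp hq) ((continuous_snd.tendsto _).comp hq)
  refine le_of_tendsto hlim (Eventually.of_forall fun n => ?_)
  obtain ⟨y, hy1, hy2⟩ := (LinearPMap.mem_graph_iff _).1 (hqmem n)
  rw [← hy1, ← hy2]
  exact hdiss y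

theorem isClosable_of_dissip (hdense : Dense (A.domain : Set H))
    (hdiss : ∀ φ : A.domain, ⟪(φ : H), A φ⟫ ≤ 0) : A.IsClosable := by
  refine ⟨(A.graph.topologicalClosure).toLinearPMap,
    (Submodule.toLinearPMap_graph_eq _ ?_).symm⟩
  intro p hp hp1
  have hkey : ∀ u : A.domain, ⟪(u : H), p.2⟫ = 0 := by
    intro u
    set c : ℝ := ⟪(u : H), p.2⟫ with hc
    set d : ℝ := ⟪(u : H), A u⟫ with hdd
    have hd0 : d ≤ 0 := hdiss u
    have hd2 : ∀ t : ℝ, t * c + t ^ 2 * d ≤ 0 := by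
      intro t
      have hmem : p + t • (((u : H), A u) : H × H) ∈ A.graph.topologicalClosure :=
        add_mem hp (Submodule.smul_mem _ t
          (Submodule.le_topologicalClosure _ (A.mem_graph u)))
      have hdis := graph_closure_dissip hdiss hmem
      have he1 : (p + t • (((u : H), A u) : H × H)).1 = t • (u : H) := by
        simp [hp1]
      have he2 : (p + t • (((u : H), A u) : H × H)).2 = p.2 + t • (A u) := by
        simp
      rw [he1, he2] at hdis
      rw [real_inner_smul_left, inner_add_right, real_inner_smul_right] at hdis
      calc t * c + t ^ 2 * d = t * (c + t * d) := by ring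
        _ ≤ 0 := hdis
    have hc1 : ∀ t : ℝ, 0 < t → |c| ≤ t * (-d) := by
      intro t ht
      have h1 := hd2 t
      have h2 := hd2 (-t)
      rw [abs_le]
      constructor
      · nlinarith
      · nlinarith
    have habs : |c| ≤ 0 := by
      by_contra hlt
      push_neg at hlt
      have hd0' : (0:ℝ) ≤ -d := neg_nonneg.2 hd0
      have htp : 0 < |c| / (2 * (-d) + 1) := div_pos hlt (by linarith)
      have h3 := hc1 _ htp
      rw [div_mul_eq_mul_div] at h3
      rw [le_div_iff₀ (by linarith)] at h3
      nlinarith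
    have : c = 0 := abs_eq_zero.1 (le_antisymm habs (abs_nonneg c))
    rw [hc] at this
    exact this
  have hfun : (fun w => ⟪w, p.2⟫) = fun _ : H => (0:ℝ) := by
    refine Continuous.ext_on hdense ?_ continuous_const ?_
    · exact continuous_id.inner continuous_const
    · intro w hw
      exact hkey ⟨w, hw⟩
  have h0 : ⟪p.2, p.2⟫ = 0 := congrFun hfun p.2
  exact inner_self_eq_zero.1 h0

theorem closure_graph_eq_Gcl (hdense : Dense (A.domain : Set H))
    (hdiss : ∀ φ : A.domain, ⟪(φ : H), A φ⟫ ≤ 0)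
    (hd : Dense (solSpace A : Set H)) (U : Set H) (hUsub : ∀ u ∈ U, u ∈ solSpace A)
    (hUdense : Dense U) : A.closure.graph = Gcl A := by
  have hclosable : A.IsClosable := isClosable_of_dissip hdense hdiss
  have hgr : A.closure.graph = A.graph.topologicalClosure :=
    hclosable.graph_closure_eq_closure_graph.symm
  have hGle : Gcl A ≤ A.graph.topologicalClosure :=
    Submodule.topologicalClosure_mono range_jmap_le_graph
  rw [hgr]
  refine le_antisymm ?_ hGle
  intro p hp
  have htop := Rsub_eq_top hdiss hd U hUsub hUdense
  have hmem : p.1 - p.2 ∈ Rsub A := by rw [htop]; trivial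
  obtain ⟨q, hq, hqe⟩ := hmem
  simp only [LinearMap.sub_apply, LinearMap.fst_apply, LinearMap.snd_apply] at hqe
  have hqgraph : q ∈ A.graph.topologicalClosure := hGle hq
  have hsubmem : p - q ∈ A.graph.topologicalClosure := sub_mem hp hqgraph
  have hdis := graph_closure_dissip hdiss hsubmem
  have heq : p.1 - q.1 = p.2 - q.2 := sub_eq_sub_iff_sub_eq_sub.1 hqe.symm
  have hdis2 : ⟪p.1 - q.1, p.1 - q.1⟫ ≤ 0 := by
    nth_rewrite 2 [heq]
    exact hdis
  have h0 : p.1 - q.1 = 0 :=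
    inner_self_eq_zero.1 (le_antisymm hdis2 real_inner_self_nonneg)
  have h0' : p.2 - q.2 = 0 := by rw [← heq]; exact h0
  have : p = q := by
    have e1 : p.1 = q.1 := by rwa [sub_eq_zero] at h0
    have e2 : p.2 = q.2 := by rwa [sub_eq_zero] at h0'
    exact Prod.ext e1 e2
  rw [this]
  exact hq

end T6

end KolAux
end Aux


open KolAux in
/-- Lemma (closure): if `A` is densely defined and dissipative and the Kolmogorov
equation `∂ₜφ = Aφ` is solvable in `C(ℝ₊;D(A)) ∩ C¹(ℝ₊;H)` for every initial datum
in a dense set `U ⊆ D(A)`, then: solutions are unique and contractive; the solution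
maps extend uniquely to a strongly continuous contraction semigroup `(T_t)`;
`A` is closable and its closure is the (Hille–Yosida) generator of `(T_t)`;
and `A T_t φ₀ = T_t A φ₀` for `φ₀ ∈ U`. -/
theorem closure_generates_semigroup
    {H : Type*} [NormedAddCommGroup H] [InnerProductSpace ℝ H] [CompleteSpace H]
    (A : H →ₗ.[ℝ] H)
    (hdense : Dense (A.domain : Set H))
    (hdiss : ∀ φ : A.domain, ⟪(φ : H), A φ⟫ ≤ 0)
    (U : Set H) (hU : ∀ x ∈ U, x ∈ A.domain) (hUdense : Dense U)
    (hsol : ∀ φ₀ ∈ U, ∃ φ ψ : ℝ → H, IsKolmogorovSolution A φ₀ φ ψ) :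
    ∃ T : ℝ → H →L[ℝ] H,
      -- contraction semigroup, strongly continuous
      (∀ t, 0 ≤ t → ‖T t‖ ≤ 1) ∧
      T 0 = ContinuousLinearMap.id ℝ H ∧
      (∀ s t, 0 ≤ s → 0 ≤ t → T (s + t) = (T s).comp (T t)) ∧
      (∀ x : H, ContinuousOn (fun t => T t x) (Ici (0 : ℝ))) ∧
      -- (i) uniqueness and contractivity of solutions; `T` extends the solution maps
      (∀ φ₀, ∀ _ : φ₀ ∈ U, ∀ φ ψ, IsKolmogorovSolution A φ₀ φ ψ →
        ∀ t, 0 ≤ t → φ t = T t φ₀ ∧ ‖φ t‖ ≤ ‖φ₀‖) ∧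
      -- (ii) uniqueness of the extension among strongly continuous contraction semigroups
      (∀ T' : ℝ → H →L[ℝ] H,
        (∀ t, 0 ≤ t → ‖T' t‖ ≤ 1) →
        T' 0 = ContinuousLinearMap.id ℝ H →
        (∀ s t, 0 ≤ s → 0 ≤ t → T' (s + t) = (T' s).comp (T' t)) →
        (∀ x : H, ContinuousOn (fun t => T' t x) (Ici (0 : ℝ))) →
        (∀ φ₀, ∀ _ : φ₀ ∈ U, ∀ φ ψ, IsKolmogorovSolution A φ₀ φ ψ →
          ∀ t, 0 ≤ t → φ t = T' t φ₀) →
        ∀ t, 0 ≤ t → T' t = T t) ∧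
      -- (iii) `A` is closable and its closure is the Hille–Yosida generator of `T`
      A.IsClosable ∧
      (∀ x : H, (x ∈ A.closure.domain ↔
        ∃ y : H, Tendsto (fun t : ℝ => t⁻¹ • (T t x - x)) (𝓝[>] (0 : ℝ)) (𝓝 y))) ∧
      (∀ x : A.closure.domain,
        Tendsto (fun t : ℝ => t⁻¹ • (T t (x : H) - (x : H))) (𝓝[>] (0 : ℝ))
          (𝓝 (A.closure x))) ∧
      -- (iv) commutation of `A` with the semigroup on `U`
      (∀ φ₀, ∀ hφ₀ : φ₀ ∈ U, ∀ t, 0 ≤ t →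
        ∃ hm : T t φ₀ ∈ A.domain, A ⟨T t φ₀, hm⟩ = T t (A ⟨φ₀, hU φ₀ hφ₀⟩)) := by
  have hUsub : ∀ u ∈ U, u ∈ solSpace A := fun u hu => hsol u hu
  have hd : Dense (solSpace A : Set H) := hUdense.mono hUsub
  have hgraph := closure_graph_eq_Gcl hdense hdiss hd U hUsub hUdense
  refine ⟨Tsem A hdiss hd, fun t _ => Tsem_norm hdiss hd t, Tsem_zero hdiss hd,
    fun s t hs ht => Tsem_add hdiss hd hs ht, Tsem_strong_cont hdiss hd,
    ?_, ?_, isClosable_of_dissip hdense hdiss, ?_, ?_, ?_⟩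
  · -- (i)
    intro φ₀ _ φ ψ hsol' t ht
    exact ⟨Tsem_sol hdiss hd hsol' ht, sol_norm_le hdiss hsol' ht⟩
  · -- (ii)
    intro T' _ _ _ _ hext t ht
    refine Tsem_ext hUdense fun u hu => ?_
    have hx : u ∈ solSpace A := hUsub u hu
    have h1 : solφ hx t = T' t u := hext u hu _ _ (sol_spec hx) t ht
    have h2 : solφ hx t = Tsem A hdiss hd t u := Tsem_sol hdiss hd (sol_spec hx) ht
    rw [← h1, h2]
  · -- (iii) domain characterization
    intro x
    constructor
    · intro hx
      refine ⟨A.closure ⟨x, hx⟩, ?_⟩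
      have hmem : (x, A.closure ⟨x, hx⟩) ∈ A.closure.graph := A.closure.mem_graph ⟨x, hx⟩
      rw [hgraph] at hmem
      exact Bdom_of_Gcl hdiss hd hmem
    · rintro ⟨y, hy⟩
      have hB : Bdom A hdiss hd x y := hy
      have hmem := Bdom_mem_Gcl hdiss hd U hUsub hUdense hB
      rw [← hgraph] at hmem
      obtain ⟨z, hz1, hz2⟩ := (LinearPMap.mem_graph_iff _).1 hmem
      have hz1' : (z : H) = x := hz1
      rw [← hz1']
      exact z.2
  · -- (iii) limit value
    intro x
    have hmem : ((x : H), A.closure x) ∈ A.closure.graph := A.closure.mem_graph x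
    rw [hgraph] at hmem
    exact Bdom_of_Gcl hdiss hd hmem
  · -- (iv)
    intro φ₀ hφ₀ t ht
    have hx : φ₀ ∈ solSpace A := hUsub φ₀ hφ₀
    have hsol0 := sol_spec hx
    obtain ⟨m, e, dv⟩ := hsol0.2.2.2 t ht
    have hTeq : Tsem A hdiss hd t φ₀ = solφ hx t := (Tsem_sol hdiss hd hsol0 ht).symm
    refine ⟨by rw [hTeq]; exact m, ?_⟩
    have h1 : A ⟨Tsem A hdiss hd t φ₀, by rw [hTeq]; exact m⟩ = A ⟨solφ hx t, m⟩ := by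
      congr 1
      exact Subtype.ext hTeq
    rw [h1, e, sol_psi_eq hdiss hd hsol0 ht]
    congr 1
    have h2 : A ⟨φ₀, hU φ₀ hφ₀⟩ = solψ hx 0 := Aval_eq_solψ hx (hU φ₀ hφ₀)
    rw [h2]
end
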